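/- arXiv:1010.2219 — 16 statements merged into one kernel-verified Lean document; each statement's English description precedes it below -/
import Mathlib

section
/- Let P = (P, ≤_P) be a finite partial order and let φ : P → 𝒫(Q) be a set representation of P. Then φ satisfies |φ(p)| = |⋃_{p' <_P p} φ(p')| + 1 for all p ∈ P if and only if φ satisfies both: (a) |φ(p) − ⋃_{p' <_P p} φ(p')| = 1 for all p ∈ P, and (b) for all p ∈ P and all q ∈ φ(p) there exists p' ≤_P p with {q} = φ(p') − ⋃_{p'' <_P p'} φ(p''). -/
namespace SatOrder

variable {α Q : Type}

/-- A set representation of a partial order: an injective map into sets such that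
`p < p'` iff `φ p ⊊ φ p'`. -/
def IsSetRep [PartialOrder α] (φ : α → Set Q) : Prop :=
  Function.Injective φ ∧ ∀ p p' : α, p < p' ↔ φ p ⊂ φ p'

/-- The residual set `φ p − ⋃_{p' < p} φ p'`. -/
def resid [PartialOrder α] (φ : α → Set Q) (p : α) : Set Q :=
  φ p \ ⋃ p' ∈ {x : α | x < p}, φ p'

/-- A parsimonious set representation: every residual is a singleton, and every element of `φ p`
is the residual element of some `p' ≤ p`. -/
def IsParsimonious [PartialOrder α] (φ : α → Set Q) : Prop :=
  IsSetRep φ ∧ (∀ p : α, ∃ q : Q, resid φ p = {q}) ∧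
    (∀ p : α, ∀ q ∈ φ p, ∃ p' : α, p' ≤ p ∧ resid φ p' = {q})

/-- `a` is the map `α_φ`, i.e. `{a p} = φ p − ⋃_{p' < p} φ p'` for all `p`. -/
def IsAlpha [PartialOrder α] (φ : α → Set Q) (a : α → Q) : Prop :=
  ∀ p : α, resid φ p = {a p}

/-- A partial order is saturated if `α_φ` is injective for every parsimonious
set representation `φ`. -/
def IsSaturated (α : Type) [PartialOrder α] : Prop :=
  ∀ (Q : Type) (φ : α → Set Q), IsParsimonious φ →
    ∀ a : α → Q, IsAlpha φ a → Function.Injective a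

/-- A bouquet with maximum `m`: a set with at least two elements whose maximum is `m`. -/
def IsBouquet [PartialOrder α] (B : Set α) (m : α) : Prop :=
  B.Nontrivial ∧ m ∈ B ∧ ∀ b ∈ B, b ≤ m

/-- A fan: a bouquet such that no two distinct elements of `F − {max F}` are comparable. -/
def IsFan [PartialOrder α] (F : Set α) (m : α) : Prop :=
  IsBouquet F m ∧ ∀ b ∈ F \ {m}, ∀ b' ∈ F \ {m}, b ≤ b' → b = b'

/-- Two sets are parallel if no element of one is comparable with any element of the other. -/
def ParallelB [PartialOrder α] (B₀ B₁ : Set α) : Prop :=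
  ∀ b₀ ∈ B₀, ∀ b₁ ∈ B₁, ¬ b₀ ≤ b₁ ∧ ¬ b₁ ≤ b₀

/-- `m` skewly tops `B₀, B₁` (with maxima `m₀, m₁`). -/
def SkewlyTops [PartialOrder α] (m : α) (B₀ B₁ : Set α) (m₀ m₁ : α) : Prop :=
  (m₀ ≤ m ∧ ¬ m₁ ≤ m ∧ ∀ p ∈ B₁ \ {m₁}, p ≤ m) ∨
  (m₁ ≤ m ∧ ¬ m₀ ≤ m ∧ ∀ p ∈ B₀ \ {m₀}, p ≤ m)

/-- `B₀` and `B₁` (with maxima `m₀, m₁`) are skewly topped. -/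
def SkewlyTopped [PartialOrder α] (B₀ B₁ : Set α) (m₀ m₁ : α) : Prop :=
  ∃ m : α, SkewlyTops m B₀ B₁ m₀ m₁

/-- For a finite partial order, a set representation satisfies the cardinality
form of parsimony iff it satisfies conditions (a) and (b). -/
theorem parsimonious_card_iff {α Q : Type} [PartialOrder α] [Finite α]
    (φ : α → Set Q) (hφ : IsSetRep φ) :
    (∀ p : α, (φ p).ncard = (⋃ p' ∈ {x : α | x < p}, φ p').ncard + 1) ↔
      ((∀ p : α, ∃ q : Q, resid φ p = {q}) ∧
        (∀ p : α, ∀ q ∈ φ p, ∃ p' : α, p' ≤ p ∧ resid φ p' = {q})) := by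
  have hsub : ∀ p : α, (⋃ p' ∈ {x : α | x < p}, φ p') ⊆ φ p := by
    intro p q hq
    simp only [Set.mem_iUnion, Set.mem_setOf_eq] at hq
    obtain ⟨p', hp', hq⟩ := hq
    exact ((hφ.2 p' p).mp hp').1 hq
  constructor
  · intro h
    have hfin : ∀ p : α, (φ p).Finite := by
      intro p
      by_contra hinf
      have h1 := h p
      rw [Set.Infinite.ncard hinf] at h1
      omega
    have hresid : ∀ p : α, ∃ q, resid φ p = {q} := by
      intro p
      have hU : (⋃ p' ∈ {x : α | x < p}, φ p').Finite := (hfin p).subset (hsub p)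
      have hcard : (resid φ p).ncard = 1 := by
        rw [resid, Set.ncard_diff (hsub p) hU, h p]
        omega
      exact Set.ncard_eq_one.mp hcard
    refine ⟨hresid, ?_⟩
    intro p
    induction p using WellFoundedLT.induction with
    | _ p ih =>
      intro q hq
      by_cases hr : q ∈ resid φ p
      · obtain ⟨q', hq'⟩ := hresid p
        rw [hq'] at hr
        exact ⟨p, le_refl p, by rw [hq', hr]⟩
      · have : q ∈ ⋃ p' ∈ {x : α | x < p}, φ p' := by
          rw [resid] at hr
          simp only [Set.mem_diff, not_and, not_not] at hr
          exact hr hq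
        simp only [Set.mem_iUnion, Set.mem_setOf_eq] at this
        obtain ⟨p'', hp'', hq''⟩ := this
        obtain ⟨p', hle, hres⟩ := ih p'' hp'' q hq''
        exact ⟨p', hle.trans hp''.le, hres⟩
  · rintro ⟨h1, h2⟩ p
    choose a ha using h1
    have hfin : ∀ p : α, (φ p).Finite := by
      intro p
      apply Set.Finite.subset (Set.finite_range a)
      intro q hq
      obtain ⟨p', _, hres⟩ := h2 p q hq
      rw [ha p'] at hres
      exact ⟨p', (Set.singleton_eq_singleton_iff.mp hres)⟩
    have hU : (⋃ p' ∈ {x : α | x < p}, φ p').Finite := (hfin p).subset (hsub p)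
    have hmem : a p ∈ resid φ p := by rw [ha p]; rfl
    have hnotU : a p ∉ ⋃ p' ∈ {x : α | x < p}, φ p' := hmem.2
    have heq : φ p = (⋃ p' ∈ {x : α | x < p}, φ p') ∪ {a p} := by
      rw [← ha p, resid, Set.union_diff_cancel (hsub p)]
    rw [heq, Set.ncard_union_eq (Set.disjoint_singleton_right.mpr hnotU) hU
      (Set.finite_singleton _), Set.ncard_singleton]

end SatOrder
end

section
/- Let P = (P, ≤_P) be a saturated partial order and let φ : P → 𝒫(Q) be a parsimonious set representation of P. Then for all p ∈ P, φ(p) equals the image under α_φ of the principal ideal π(p) = {p' ∈ P : p' ≤_P p}; moreover, for all p, p' ∈ P, p ≤_P p' if and only if α_φ(p) ∈ φ(p'). -/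
namespace SatOrder

variable {α Q : Type}

/-- If `P` is saturated and `φ` is a parsimonious set representation, then
`φ p` is the image under `α_φ` of the principal ideal of `p`, and `p ≤ p'` iff
`α_φ p ∈ φ p'`. -/
theorem saturated_rep_eq_image_principal_ideal {α Q : Type} [PartialOrder α]
    (hsat : IsSaturated α) (φ : α → Set Q) (hφ : IsParsimonious φ)
    (a : α → Q) (ha : IsAlpha φ a) :
    (∀ p : α, φ p = a '' {p' : α | p' ≤ p}) ∧
      (∀ p p' : α, p ≤ p' ↔ a p ∈ φ p') := by
  have hinj : Function.Injective a := hsat Q φ hφ a ha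
  have hmem : ∀ p : α, a p ∈ φ p := by
    intro p
    have := ha p
    have : a p ∈ resid φ p := by rw [this]; rfl
    exact this.1
  have hsub : ∀ {p p' : α}, p ≤ p' → φ p ⊆ φ p' := by
    intro p p' h
    rcases lt_or_eq_of_le h with h | h
    · exact ((hφ.1.2 p p').mp h).1
    · rw [h]
  have hfwd : ∀ p : α, φ p = a '' {p' : α | p' ≤ p} := by
    intro p
    ext q
    constructor
    · intro hq
      obtain ⟨p', hle, hres⟩ := hφ.2.2 p q hq
      have : a p' = q := by
        have := (ha p') ▸ hres
        exact Set.singleton_eq_singleton_iff.mp this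
      exact ⟨p', hle, this⟩
    · rintro ⟨p', hle, rfl⟩
      exact hsub hle (hmem p')
  refine ⟨hfwd, fun p p' => ⟨fun h => hsub h (hmem p), fun h => ?_⟩⟩
  obtain ⟨p'', hle, hres⟩ := hφ.2.2 p' (a p) h
  have : a p'' = a p := by
    have := (ha p'') ▸ hres
    exact Set.singleton_eq_singleton_iff.mp this
  rw [← hinj this]; exact hle

end SatOrder
end

section
/- If P = (P, ≤_P) is a finite partial order, then every two parallel fans in P are skewly topped if and only if every two parallel bouquets in P are skewly topped. -/
namespace SatOrder

variable {α Q : Type}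

/-- In a finite partial order, every two parallel fans are skewly topped iff
every two parallel bouquets are skewly topped. -/
theorem fans_topped_iff_bouquets_topped_of_finite {α : Type} [PartialOrder α] [Finite α] :
    (∀ (F₀ F₁ : Set α) (m₀ m₁ : α), IsFan F₀ m₀ → IsFan F₁ m₁ → ParallelB F₀ F₁ →
        SkewlyTopped F₀ F₁ m₀ m₁) ↔
      (∀ (B₀ B₁ : Set α) (m₀ m₁ : α), IsBouquet B₀ m₀ → IsBouquet B₁ m₁ → ParallelB B₀ B₁ →
        SkewlyTopped B₀ B₁ m₀ m₁) := by
  constructor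
  · intro hF B₀ B₁ m₀ m₁ hB₀ hB₁ hpar
    -- build fans from maximal elements of Bᵢ \ {mᵢ}
    classical
    set F₀ : Set α := insert m₀ {x | Maximal (· ∈ B₀ \ {m₀}) x} with hF₀def
    set F₁ : Set α := insert m₁ {x | Maximal (· ∈ B₁ \ {m₁}) x} with hF₁def
    have sub : ∀ (B : Set α) (m : α), IsBouquet B m →
        insert m {x | Maximal (· ∈ B \ {m}) x} ⊆ B := by
      intro B m hB x hx
      rcases hx with rfl | hx
      · exact hB.2.1
      · exact hx.1.1
    have fan : ∀ (B : Set α) (m : α), IsBouquet B m →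
        IsFan (insert m {x | Maximal (· ∈ B \ {m}) x}) m := by
      intro B m hB
      obtain ⟨b, hbB, hbm⟩ := hB.1.exists_ne m
      have hb' : b ∈ B \ {m} := ⟨hbB, hbm⟩
      obtain ⟨c, hbc, hc⟩ := Finite.exists_le_maximal hb'
      have hcm : c ≠ m := hc.1.2
      refine ⟨⟨⟨m, Set.mem_insert _ _, c, Set.mem_insert_of_mem _ hc, fun h => hcm h.symm⟩,
        Set.mem_insert _ _, ?_⟩, ?_⟩
      · intro x hx
        exact sub B m hB hx |> hB.2.2 x
      · intro x hx y hy hxy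
        have hx' : Maximal (· ∈ B \ {m}) x := by
          rcases hx.1 with rfl | h
          · exact absurd rfl hx.2
          · exact h
        have hy' : Maximal (· ∈ B \ {m}) y := by
          rcases hy.1 with rfl | h
          · exact absurd rfl hy.2
          · exact h
        exact le_antisymm hxy (hx'.2 hy'.1 hxy)
    have cover : ∀ (B : Set α) (m : α), ∀ p ∈ B \ {m},
        ∃ x, Maximal (· ∈ B \ {m}) x ∧ p ≤ x := by
      intro B m p hp
      obtain ⟨x, hpx, hx⟩ := Finite.exists_le_maximal hp
      exact ⟨x, hx, hpx⟩
    have hparF : ParallelB F₀ F₁ := fun x hx y hy =>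
      hpar x (sub _ _ hB₀ hx) y (sub _ _ hB₁ hy)
    obtain ⟨m, hm⟩ := hF F₀ F₁ m₀ m₁ (fan _ _ hB₀) (fan _ _ hB₁) hparF
    refine ⟨m, ?_⟩
    rcases hm with ⟨h1, h2, h3⟩ | ⟨h1, h2, h3⟩
    · refine Or.inl ⟨h1, h2, fun p hp => ?_⟩
      obtain ⟨x, hx, hpx⟩ := cover B₁ m₁ p hp
      have : x ∈ F₁ \ {m₁} := ⟨Set.mem_insert_of_mem _ hx, hx.1.2⟩
      exact hpx.trans (h3 x this)
    · refine Or.inr ⟨h1, h2, fun p hp => ?_⟩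
      obtain ⟨x, hx, hpx⟩ := cover B₀ m₀ p hp
      have : x ∈ F₀ \ {m₀} := ⟨Set.mem_insert_of_mem _ hx, hx.1.2⟩
      exact hpx.trans (h3 x this)
  · intro hB F₀ F₁ m₀ m₁ h₀ h₁ hpar
    exact hB F₀ F₁ m₀ m₁ h₀.1 h₁.1 hpar


end SatOrder
end

section
/- If P = (P, ≤_P) is a partial order in which every element has only finitely many ≤_P-successors, then every two parallel fans in P are skewly topped if and only if every two parallel bouquets in P are skewly topped. -/
namespace SatOrder

variable {α Q : Type}

/-- Every element of `B \ {m}` lies below a maximal element of `B \ {m}`. -/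
lemma exists_le_maximal {α : Type} [PartialOrder α]
    (hfin : ∀ p : α, {p' : α | p ≤ p'}.Finite) (B : Set α) (m : α) {p : α}
    (hp : p ∈ B \ {m}) :
    ∃ x ∈ B \ {m}, p ≤ x ∧ ∀ y ∈ B \ {m}, x ≤ y → x = y := by
  have hT : ({x | x ∈ B \ {m} ∧ p ≤ x} : Set α).Finite :=
    (hfin p).subset (fun x hx => hx.2)
  obtain ⟨x, hx, hmax⟩ := hT.exists_maximal (⟨p, hp, le_refl p⟩)
  refine ⟨x, hx.1, hx.2, fun y hy hxy => ?_⟩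
  exact le_antisymm hxy (hmax ⟨hy, hx.2.trans hxy⟩ hxy)

/-- The fan of maximal elements of a bouquet. -/
lemma fan_of_bouquet {α : Type} [PartialOrder α]
    (hfin : ∀ p : α, {p' : α | p ≤ p'}.Finite) (B : Set α) (m : α)
    (hB : IsBouquet B m) :
    IsFan (insert m {x ∈ B \ {m} | ∀ y ∈ B \ {m}, x ≤ y → x = y}) m := by
  obtain ⟨hnt, hmB, hub⟩ := hB
  set S : Set α := {x ∈ B \ {m} | ∀ y ∈ B \ {m}, x ≤ y → x = y} with hS
  obtain ⟨p, hpB, hpm⟩ := hnt.exists_ne m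
  obtain ⟨x, hxBm, _, hxmax⟩ := exists_le_maximal hfin B m ⟨hpB, hpm⟩
  have hxS : x ∈ S := ⟨hxBm, hxmax⟩
  refine ⟨⟨⟨x, Set.mem_insert_of_mem _ hxS, m, Set.mem_insert _ _, hxBm.2⟩,
    Set.mem_insert _ _, ?_⟩, ?_⟩
  · rintro b (rfl | hb)
    · exact le_refl _
    · exact hub b hb.1.1
  · rintro b ⟨hb, hbm⟩ b' ⟨hb', hb'm⟩ hle
    have hbS : b ∈ S := hb.resolve_left (fun h => hbm h)
    have hb'S : b' ∈ S := hb'.resolve_left (fun h => hb'm h)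
    exact hbS.2 b' hb'S.1 hle

/-- In a partial order in which every element has only finitely many successors,
every two parallel fans are skewly topped iff every two parallel bouquets are skewly topped. -/
theorem fans_topped_iff_bouquets_topped {α : Type} [PartialOrder α]
    (hfin : ∀ p : α, {p' : α | p ≤ p'}.Finite) :
    (∀ (F₀ F₁ : Set α) (m₀ m₁ : α), IsFan F₀ m₀ → IsFan F₁ m₁ → ParallelB F₀ F₁ →
        SkewlyTopped F₀ F₁ m₀ m₁) ↔
      (∀ (B₀ B₁ : Set α) (m₀ m₁ : α), IsBouquet B₀ m₀ → IsBouquet B₁ m₁ → ParallelB B₀ B₁ →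
        SkewlyTopped B₀ B₁ m₀ m₁) := by
  constructor
  · intro hF B₀ B₁ m₀ m₁ hB₀ hB₁ hpar
    set F₀ : Set α := insert m₀ {x ∈ B₀ \ {m₀} | ∀ y ∈ B₀ \ {m₀}, x ≤ y → x = y} with hF₀def
    set F₁ : Set α := insert m₁ {x ∈ B₁ \ {m₁} | ∀ y ∈ B₁ \ {m₁}, x ≤ y → x = y} with hF₁def
    have hsub₀ : F₀ ⊆ B₀ := by
      rintro x (rfl | hx); exacts [hB₀.2.1, hx.1.1]
    have hsub₁ : F₁ ⊆ B₁ := by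
      rintro x (rfl | hx); exacts [hB₁.2.1, hx.1.1]
    obtain ⟨m, hm⟩ := hF F₀ F₁ m₀ m₁ (fan_of_bouquet hfin B₀ m₀ hB₀)
      (fan_of_bouquet hfin B₁ m₁ hB₁)
      (fun b₀ hb₀ b₁ hb₁ => hpar b₀ (hsub₀ hb₀) b₁ (hsub₁ hb₁))
    refine ⟨m, ?_⟩
    rcases hm with ⟨h1, h2, h3⟩ | ⟨h1, h2, h3⟩
    · refine Or.inl ⟨h1, h2, fun p hp => ?_⟩
      obtain ⟨x, hxBm, hpx, hxmax⟩ := exists_le_maximal hfin B₁ m₁ hp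
      exact hpx.trans (h3 x ⟨Set.mem_insert_of_mem _ ⟨hxBm, hxmax⟩, hxBm.2⟩)
    · refine Or.inr ⟨h1, h2, fun p hp => ?_⟩
      obtain ⟨x, hxBm, hpx, hxmax⟩ := exists_le_maximal hfin B₀ m₀ hp
      exact hpx.trans (h3 x ⟨Set.mem_insert_of_mem _ ⟨hxBm, hxmax⟩, hxBm.2⟩)
  · intro hB F₀ F₁ m₀ m₁ hF₀ hF₁ hpar
    exact hB F₀ F₁ m₀ m₁ hF₀.1 hF₁.1 hpar

end SatOrder
end

section
/- Let P = (P, ≤_P) be a partial order in which every element has only finitely many ≤_P-successors, and let B₀ and B₁ be parallel bouquets in P. For i ∈ {0,1} set F_i = {b ∈ B_i : for all b' with b ≤_P b', if b' ∈ B_i then b' = max B_i}. Then F₀ and F₁ are parallel fans in P with max F_i = max B_i, and an element m ∈ P skewly tops B₀ and B₁ if and only if it skewly tops F₀ and F₁. -/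
namespace SatOrder

variable {α Q : Type}

lemma exists_fan_elem {α : Type} [PartialOrder α]
    (hfin : ∀ p : α, {p' : α | p ≤ p'}.Finite)
    (B : Set α) (mB : α) (_hB : IsBouquet B mB) (p : α) (hp : p ∈ B) (hpne : p ≠ mB) :
    ∃ x : α, x ∈ B ∧ x ≠ mB ∧ p ≤ x ∧ ∀ b' : α, x < b' → b' ∈ B → b' = mB := by
  set S : Set α := {x ∈ B | x ≠ mB ∧ p ≤ x} with hS
  have hSfin : S.Finite := (hfin p).subset (fun x hx => hx.2.2)
  have hne : S.Nonempty := ⟨p, hp, hpne, le_refl p⟩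
  obtain ⟨x, hxS, hmax⟩ : ∃ x ∈ S, ∀ a' ∈ S, id x ≤ id a' → id x = id a' := by
    obtain ⟨x, hxS, hmax⟩ := hSfin.exists_maximalFor id S hne
    exact ⟨x, hxS, fun a' ha' h => le_antisymm h (hmax ha' h)⟩
  refine ⟨x, hxS.1, hxS.2.1, hxS.2.2, fun b' hlt hb' => ?_⟩
  by_contra hne'
  have : b' ∈ S := ⟨hb', hne', le_trans hxS.2.2 hlt.le⟩
  exact absurd (hmax b' this hlt.le) hlt.ne

/-- Parallel bouquets can be replaced by parallel fans with the same maxima,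
preserving skew topping, in a partial order where every element has finitely many
successors. -/
theorem bouquets_to_fans {α : Type} [PartialOrder α]
    (hfin : ∀ p : α, {p' : α | p ≤ p'}.Finite)
    (B₀ B₁ : Set α) (m₀ m₁ : α) (h₀ : IsBouquet B₀ m₀) (h₁ : IsBouquet B₁ m₁)
    (hpar : ParallelB B₀ B₁) :
    letI F₀ : Set α := {b ∈ B₀ | ∀ b' : α, b < b' → b' ∈ B₀ → b' = m₀}
    letI F₁ : Set α := {b ∈ B₁ | ∀ b' : α, b < b' → b' ∈ B₁ → b' = m₁}
    IsFan F₀ m₀ ∧ IsFan F₁ m₁ ∧ ParallelB F₀ F₁ ∧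
      ∀ m : α, (SkewlyTops m B₀ B₁ m₀ m₁ ↔ SkewlyTops m F₀ F₁ m₀ m₁) := by
  set F₀ : Set α := {b | b ∈ B₀ ∧ ∀ (b' : α), b < b' → b' ∈ B₀ → b' = m₀}
  set F₁ : Set α := {b | b ∈ B₁ ∧ ∀ (b' : α), b < b' → b' ∈ B₁ → b' = m₁}
  have hF0sub : F₀ ⊆ B₀ := fun x hx => hx.1
  have hF1sub : F₁ ⊆ B₁ := fun x hx => hx.1
  have hm0F : m₀ ∈ F₀ := ⟨h₀.2.1, fun b' hlt hb' => le_antisymm (h₀.2.2 b' hb') hlt.le⟩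
  have hm1F : m₁ ∈ F₁ := ⟨h₁.2.1, fun b' hlt hb' => le_antisymm (h₁.2.2 b' hb') hlt.le⟩
  have key0 : ∀ p ∈ B₀, p ≠ m₀ → ∃ x, x ∈ F₀ ∧ x ≠ m₀ ∧ p ≤ x := by
    intro p hp hpne
    obtain ⟨x, hxB, hxne, hpx, hx⟩ := exists_fan_elem hfin B₀ m₀ h₀ p hp hpne
    exact ⟨x, ⟨hxB, hx⟩, hxne, hpx⟩
  have key1 : ∀ p ∈ B₁, p ≠ m₁ → ∃ x, x ∈ F₁ ∧ x ≠ m₁ ∧ p ≤ x := by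
    intro p hp hpne
    obtain ⟨x, hxB, hxne, hpx, hx⟩ := exists_fan_elem hfin B₁ m₁ h₁ p hp hpne
    exact ⟨x, ⟨hxB, hx⟩, hxne, hpx⟩
  have hfan0 : IsFan F₀ m₀ := by
    refine ⟨⟨?_, hm0F, fun b hb => h₀.2.2 b hb.1⟩, ?_⟩
    · obtain ⟨a, ha, b, hb, hab⟩ := h₀.1
      rcases eq_or_ne a m₀ with hm | hane
      · obtain ⟨x, hx, hxne, _⟩ := key0 b hb (fun h => hab (hm.trans h.symm))
        exact ⟨x, hx, m₀, hm0F, hxne⟩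
      · obtain ⟨x, hx, hxne, _⟩ := key0 a ha hane
        exact ⟨x, hx, m₀, hm0F, hxne⟩
    · intro b hb b' hb' hle
      by_contra hne
      exact (Set.mem_singleton_iff.not.mp hb'.2) (hb.1.2 b' (lt_of_le_of_ne hle hne) hb'.1.1)
  have hfan1 : IsFan F₁ m₁ := by
    refine ⟨⟨?_, hm1F, fun b hb => h₁.2.2 b hb.1⟩, ?_⟩
    · obtain ⟨a, ha, b, hb, hab⟩ := h₁.1
      rcases eq_or_ne a m₁ with hm | hane
      · obtain ⟨x, hx, hxne, _⟩ := key1 b hb (fun h => hab (hm.trans h.symm))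
        exact ⟨x, hx, m₁, hm1F, hxne⟩
      · obtain ⟨x, hx, hxne, _⟩ := key1 a ha hane
        exact ⟨x, hx, m₁, hm1F, hxne⟩
    · intro b hb b' hb' hle
      by_contra hne
      exact (Set.mem_singleton_iff.not.mp hb'.2) (hb.1.2 b' (lt_of_le_of_ne hle hne) hb'.1.1)
  refine ⟨hfan0, hfan1, fun a ha b hb => hpar a (hF0sub ha) b (hF1sub hb), fun m => ?_⟩
  constructor
  · rintro (⟨h1, h2, h3⟩ | ⟨h1, h2, h3⟩)
    · exact Or.inl ⟨h1, h2, fun p hp => h3 p ⟨hF1sub hp.1, hp.2⟩⟩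
    · exact Or.inr ⟨h1, h2, fun p hp => h3 p ⟨hF0sub hp.1, hp.2⟩⟩
  · rintro (⟨h1, h2, h3⟩ | ⟨h1, h2, h3⟩)
    · refine Or.inl ⟨h1, h2, fun p hp => ?_⟩
      obtain ⟨x, hx, hxne, hpx⟩ := key1 p hp.1 hp.2
      exact le_trans hpx (h3 x ⟨hx, hxne⟩)
    · refine Or.inr ⟨h1, h2, fun p hp => ?_⟩
      obtain ⟨x, hx, hxne, hpx⟩ := key0 p hp.1 hp.2
      exact le_trans hpx (h3 x ⟨hx, hxne⟩)


end SatOrder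
end

section
/- A partial order P = (P, ≤_P) is saturated if and only if every two parallel bouquets in P are skewly topped. -/
namespace SatOrder

variable {α Q : Type}

section Aux

variable [PartialOrder α]

lemma mem_resid_iff (φ : α → Set Q) (p : α) (q : Q) :
    q ∈ resid φ p ↔ q ∈ φ p ∧ ∀ x, x < p → q ∉ φ x := by
  simp only [resid, Set.mem_diff, Set.mem_iUnion, Set.mem_setOf_eq, exists_prop, not_exists,
    not_and]

lemma setrep_mono {φ : α → Set Q} (h : IsSetRep φ) {p p' : α} (hpp : p ≤ p') : φ p ⊆ φ p' := by
  rcases eq_or_lt_of_le hpp with rfl | h'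
  · exact subset_rfl
  · exact ((h.2 p p').1 h').subset

lemma setrep_le {φ : α → Set Q} (h : IsSetRep φ) {p p' : α} (hpp : φ p ⊆ φ p') : p ≤ p' := by
  rcases hpp.ssubset_or_eq with hss | heq
  · exact ((h.2 p p').2 hss).le
  · exact (h.1 heq).le

lemma alpha_mem {φ : α → Set Q} {a : α → Q} (ha : IsAlpha φ a) (p : α) : a p ∈ φ p :=
  ((mem_resid_iff φ p (a p)).1 (by rw [ha p]; exact rfl)).1

lemma alpha_notMem {φ : α → Set Q} {a : α → Q} (ha : IsAlpha φ a) {p x : α} (hx : x < p) :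
    a p ∉ φ x :=
  ((mem_resid_iff φ p (a p)).1 (by rw [ha p]; exact rfl)).2 x hx

lemma phi_eq {φ : α → Set Q} {a : α → Q} (hP : IsParsimonious φ) (ha : IsAlpha φ a) (p : α) :
    φ p = a '' {x | x ≤ p} := by
  ext r
  constructor
  · intro hr
    obtain ⟨p', hp', hres⟩ := hP.2.2 p r hr
    refine ⟨p', hp', ?_⟩
    have h2 := hres.symm.trans (ha p')
    exact (Set.singleton_eq_singleton_iff.1 h2).symm
  · rintro ⟨x, hx, rfl⟩
    exact setrep_mono hP.1 hx (alpha_mem ha x)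

/-- If `m` tops `p₀` and everything below `p₁` whose label is not already realized
below `p₀`, while the labels of `p₀` and `p₁` agree, then `φ p₁ ⊆ φ m`, so `p₁ ≤ m`. -/
lemma topped_contra {φ : α → Set Q} {a : α → Q} (hP : IsParsimonious φ) (ha : IsAlpha φ a)
    {p₀ p₁ m : α} (hq : a p₀ = a p₁) (h₀ : p₀ ≤ m) (h₁ : ¬ p₁ ≤ m)
    (hC : ∀ x, x < p₁ → a x ∉ a '' {y | y ≤ p₀} → x ≤ m) : False := by
  apply h₁
  apply setrep_le hP.1
  rw [phi_eq hP ha p₁, phi_eq hP ha m]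
  rintro r ⟨x, hx, rfl⟩
  have hx' : x ≤ p₁ := hx
  rcases eq_or_lt_of_le hx' with h | hxlt
  · exact ⟨p₀, h₀, by rw [h]; exact hq⟩
  · by_cases hmem : a x ∈ a '' {y | y ≤ p₀}
    · obtain ⟨y, hy, hyx⟩ := hmem
      exact ⟨y, le_trans hy h₀, hyx⟩
    · exact ⟨x, hC x hxlt hmem, rfl⟩

end Aux

/-- A partial order is saturated iff every two parallel bouquets in it are
skewly topped. -/
theorem saturated_iff_bouquets_topped {α : Type} [PartialOrder α] :
    IsSaturated α ↔
      ∀ (B₀ B₁ : Set α) (m₀ m₁ : α), IsBouquet B₀ m₀ → IsBouquet B₁ m₁ → ParallelB B₀ B₁ →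
        SkewlyTopped B₀ B₁ m₀ m₁ := by
  constructor
  · -- saturated → every two parallel bouquets are skewly topped
    intro hsat B₀ B₁ m₀ m₁ hB₀ hB₁ hpar
    by_contra hnst
    classical
    -- the gluing map identifying m₁ with m₀
    set f : α → α := fun x => if x = m₁ then m₀ else x with hf
    set φ : α → Set α := fun p => f '' {x | x ≤ p} with hφ
    have hm01 : ¬ m₀ ≤ m₁ := (hpar m₀ hB₀.2.1 m₁ hB₁.2.1).1
    have hm10 : ¬ m₁ ≤ m₀ := (hpar m₀ hB₀.2.1 m₁ hB₁.2.1).2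
    have hne : m₀ ≠ m₁ := fun h => hm01 (le_of_eq h)
    have hfm0 : f m₀ = m₀ := if_neg hne
    have hfm1 : f m₁ = m₀ := if_pos rfl
    have hfne : ∀ x : α, x ≠ m₁ → f x = x := fun x h => if_neg h
    have hfcase : ∀ x y : α, f x = f y → x = y ∨ ((x = m₁ ∨ x = m₀) ∧ (y = m₁ ∨ y = m₀)) := by
      intro x y
      simp only [hf]
      split_ifs with h1 h2 h2 <;> intro h <;> tauto
    have hfm0' : ∀ x : α, f x = m₀ → x = m₀ ∨ x = m₁ := by
      intro x
      simp only [hf]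
      split_ifs with h1 <;> intro h <;> tauto
    have hmemφ : ∀ x p : α, x ≤ p → f x ∈ φ p := by
      intro x p h
      exact ⟨x, h, rfl⟩
    -- key: φ p ⊆ φ p' → p ≤ p'  (uses that B₀, B₁ are not skewly topped)
    have hle : ∀ p p' : α, φ p ⊆ φ p' → p ≤ p' := by
      intro p p' hsub
      by_cases hp : p = m₁
      · have hm : f m₁ ∈ φ p' := hsub (show f m₁ ∈ φ p by rw [hp]; exact hmemφ m₁ m₁ (le_refl _))
        rw [hfm1] at hm
        obtain ⟨x, hx, hfx⟩ := hm
        have hx' : x ≤ p' := hx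
        rw [hp]
        rcases hfm0' x hfx with h | h
        · -- x = m₀
          by_cases hm1 : m₁ ≤ p'
          · exact hm1
          · exfalso
            apply hnst
            refine ⟨p', Or.inl ⟨h ▸ hx', hm1, ?_⟩⟩
            rintro b ⟨hbB, hbne⟩
            have hbm : b ≤ m₁ := hB₁.2.2 b hbB
            have hbne1 : b ≠ m₁ := fun hh => hbne (by simp [hh])
            have hbne0 : b ≠ m₀ := fun hh => hm01 (hh ▸ hbm)
            have hb : f b ∈ φ p' := hsub (show f b ∈ φ p by rw [hp]; exact hmemφ b m₁ hbm)
            obtain ⟨y, hy, hfy⟩ := hb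
            have hy' : y ≤ p' := hy
            rcases hfcase y b hfy with h2 | ⟨_, (h2 | h2)⟩
            · exact h2 ▸ hy'
            · exact absurd h2 hbne1
            · exact absurd h2 hbne0
        · exact h ▸ hx'
      · have hm : f p ∈ φ p' := hsub (hmemφ p p (le_refl _))
        obtain ⟨x, hx, hfx⟩ := hm
        have hx' : x ≤ p' := hx
        rcases hfcase x p hfx with h | ⟨hx1, hp1⟩
        · exact h ▸ hx'
        · have hp0 : p = m₀ := hp1.resolve_left hp
          rw [hp0]
          rcases hx1 with h | h
          · -- x = m₁
            by_cases hm0 : m₀ ≤ p'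
            · exact hm0
            · exfalso
              apply hnst
              refine ⟨p', Or.inr ⟨h ▸ hx', hm0, ?_⟩⟩
              rintro b ⟨hbB, hbne⟩
              have hbm : b ≤ m₀ := hB₀.2.2 b hbB
              have hbne0 : b ≠ m₀ := fun hh => hbne (by simp [hh])
              have hbne1 : b ≠ m₁ := fun hh => hm10 (hh ▸ hbm)
              have hb : f b ∈ φ p' := hsub (show f b ∈ φ p by rw [hp0]; exact hmemφ b m₀ hbm)
              obtain ⟨y, hy, hfy⟩ := hb
              have hy' : y ≤ p' := hy
              rcases hfcase y b hfy with h2 | ⟨_, (h2 | h2)⟩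
              · exact h2 ▸ hy'
              · exact absurd h2 hbne1
              · exact absurd h2 hbne0
          · exact h ▸ hx'
    -- φ is a set representation
    have hrep : IsSetRep φ := by
      constructor
      · intro p p' h
        exact le_antisymm (hle p p' h.subset) (hle p' p h.symm.subset)
      · intro p p'
        constructor
        · intro hlt
          have hsub : φ p ⊆ φ p' := by
            rintro q ⟨x, hx, rfl⟩
            exact hmemφ x p' (le_trans hx hlt.le)
          refine ⟨hsub, fun h => ?_⟩
          exact absurd (le_antisymm (hle p' p h) hlt.le) (ne_of_gt hlt)
        · intro hss
          rcases eq_or_lt_of_le (hle p p' hss.subset) with h | h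
          · exact absurd (congrArg φ h) hss.ne
          · exact h
    -- residuals of φ are singletons {f p}
    have hresid : ∀ p : α, resid φ p = {f p} := by
      intro p
      ext q
      rw [mem_resid_iff, Set.mem_singleton_iff]
      constructor
      · rintro ⟨⟨y, hy, hfy⟩, hnot⟩
        have hy' : y ≤ p := hy
        rcases eq_or_lt_of_le hy' with h | h
        · rw [← hfy, h]
        · exact absurd (hmemφ y y (le_refl _)) (by rw [hfy]; exact hnot y h)
      · rintro rfl
        refine ⟨hmemφ p p (le_refl _), ?_⟩
        rintro x hxp ⟨y, hy, hfy⟩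
        have hy' : y ≤ x := hy
        have hyp : y < p := lt_of_le_of_lt hy' hxp
        rcases hfcase y p hfy with h | ⟨(h1 | h1), (h2 | h2)⟩
        · exact lt_irrefl _ (h ▸ hyp)
        · exact lt_irrefl _ ((h1.trans h2.symm) ▸ hyp)
        · exact hm10 (by rw [h1, h2] at hyp; exact hyp.le)
        · exact hm01 (by rw [h1, h2] at hyp; exact hyp.le)
        · exact lt_irrefl _ ((h1.trans h2.symm) ▸ hyp)
    have hpars : IsParsimonious φ := by
      refine ⟨hrep, fun p => ⟨f p, hresid p⟩, ?_⟩
      rintro p q ⟨y, hy, rfl⟩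
      exact ⟨y, hy, hresid y⟩
    have halpha : IsAlpha φ f := hresid
    have hinj := hsat α φ hpars f halpha
    exact hne (hinj (hfm0.trans hfm1.symm))
  · -- every two parallel bouquets skewly topped → saturated
    intro H Q φ hP a ha
    intro p₀ p₁ hq
    by_contra hne
    -- fibers of a are antichains
    have hincomp : ∀ x y : α, a x = a y → ¬ x < y := by
      intro x y hxy hlt
      exact alpha_notMem ha hlt (hxy ▸ alpha_mem ha x)
    have h01 : ¬ p₀ < p₁ := hincomp p₀ p₁ hq
    have h10 : ¬ p₁ < p₀ := hincomp p₁ p₀ hq.symm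
    -- the auxiliary sets are nonempty
    have hCne : ∀ u v : α, a u = a v → u ≠ v → ¬ u < v →
        ({x | x < u ∧ a x ∉ a '' {y | y ≤ v}} : Set α).Nonempty := by
      intro u v huv hneq hlt
      by_contra hemp
      rw [Set.not_nonempty_iff_eq_empty] at hemp
      have hsub : φ u ⊆ φ v := by
        rw [phi_eq hP ha u, phi_eq hP ha v]
        rintro r ⟨x, hx, rfl⟩
        have hx' : x ≤ u := hx
        rcases eq_or_lt_of_le hx' with h | h
        · exact ⟨v, le_refl _, by rw [h]; exact huv.symm⟩
        · by_cases hmem : a x ∈ a '' {y | y ≤ v}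
          · exact hmem
          · exact absurd (show x ∈ {x | x < u ∧ a x ∉ a '' {y | y ≤ v}} from ⟨h, hmem⟩)
              (by rw [hemp]; exact Set.notMem_empty x)
      rcases eq_or_lt_of_le (setrep_le hP.1 hsub) with h | h
      · exact hneq h
      · exact hlt h
    obtain ⟨c₀, hc₀⟩ := hCne p₀ p₁ hq hne h01
    obtain ⟨c₁, hc₁⟩ := hCne p₁ p₀ hq.symm (Ne.symm hne) h10
    set C₀ : Set α := {x | x < p₀ ∧ a x ∉ a '' {y | y ≤ p₁}} with hC₀def
    set C₁ : Set α := {x | x < p₁ ∧ a x ∉ a '' {y | y ≤ p₀}} with hC₁def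
    set B₀ : Set α := insert p₀ C₀ with hB₀def
    set B₁ : Set α := insert p₁ C₁ with hB₁def
    have hbouq₀ : IsBouquet B₀ p₀ := by
      refine ⟨⟨p₀, Set.mem_insert _ _, c₀, Set.mem_insert_of_mem _ hc₀, fun h => ?_⟩,
        Set.mem_insert _ _, ?_⟩
      · exact absurd (h ▸ hc₀.1) (lt_irrefl p₀)
      · intro b hb
        rcases Set.mem_insert_iff.1 hb with rfl | hb'
        · exact le_refl _
        · exact le_of_lt hb'.1
    have hbouq₁ : IsBouquet B₁ p₁ := by
      refine ⟨⟨p₁, Set.mem_insert _ _, c₁, Set.mem_insert_of_mem _ hc₁, fun h => ?_⟩,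
        Set.mem_insert _ _, ?_⟩
      · exact absurd (h ▸ hc₁.1) (lt_irrefl p₁)
      · intro b hb
        rcases Set.mem_insert_iff.1 hb with rfl | hb'
        · exact le_refl _
        · exact le_of_lt hb'.1
    have hparB : ParallelB B₀ B₁ := by
      intro b₀ hb₀ b₁ hb₁
      constructor
      · intro hle01
        have hb1p : b₁ ≤ p₁ := hbouq₁.2.2 b₁ hb₁
        have hb01 : b₀ ≤ p₁ := le_trans hle01 hb1p
        rcases Set.mem_insert_iff.1 hb₀ with rfl | hb₀'
        · rcases eq_or_lt_of_le hb01 with h | h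
          · exact hne h
          · exact h01 h
        · exact hb₀'.2 ⟨b₀, hb01, rfl⟩
      · intro hle10
        have hb0p : b₀ ≤ p₀ := hbouq₀.2.2 b₀ hb₀
        have hb10 : b₁ ≤ p₀ := le_trans hle10 hb0p
        rcases Set.mem_insert_iff.1 hb₁ with rfl | hb₁'
        · rcases eq_or_lt_of_le hb10 with h | h
          · exact hne h.symm
          · exact h10 h
        · exact hb₁'.2 ⟨b₁, hb10, rfl⟩
    obtain ⟨m, hm⟩ := H B₀ B₁ p₀ p₁ hbouq₀ hbouq₁ hparB
    rcases hm with ⟨hm₀, hm₁, hcov⟩ | ⟨hm₁, hm₀, hcov⟩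
    · refine topped_contra hP ha hq hm₀ hm₁ (fun x hx hmem => hcov x ?_)
      have hxB : x ∈ B₁ := Set.mem_insert_of_mem _ ⟨hx, hmem⟩
      exact ⟨hxB, fun h => absurd ((Set.mem_singleton_iff.1 h) ▸ hx) (lt_irrefl p₁)⟩
    · refine topped_contra hP ha hq.symm hm₁ hm₀ (fun x hx hmem => hcov x ?_)
      have hxB : x ∈ B₀ := Set.mem_insert_of_mem _ ⟨hx, hmem⟩
      exact ⟨hxB, fun h => absurd ((Set.mem_singleton_iff.1 h) ▸ hx) (lt_irrefl p₀)⟩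

end SatOrder
end

section
/- Let P = (P, ≤_P) be a partial order and let B₀ and B₁ be two parallel bouquets in P that are not skewly topped. Then there exists a parsimonious set representation φ of P such that α_φ(max B₀) = α_φ(max B₁); in particular, P is not saturated. -/
namespace SatOrder

variable {α Q : Type}

/-- If `B₀` and `B₁` are parallel bouquets that are not skewly topped, then
there is a parsimonious set representation `φ` with `α_φ (max B₀) = α_φ (max B₁)`;
in particular, `P` is not saturated. -/
theorem not_saturated_of_parallel_bouquets_not_topped {α : Type} [PartialOrder α]
    (B₀ B₁ : Set α) (m₀ m₁ : α) (h₀ : IsBouquet B₀ m₀) (h₁ : IsBouquet B₁ m₁)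
    (hpar : ParallelB B₀ B₁) (hns : ¬ SkewlyTopped B₀ B₁ m₀ m₁) :
    (∃ (Q : Type) (φ : α → Set Q), IsParsimonious φ ∧
        ∃ q : Q, resid φ m₀ = {q} ∧ resid φ m₁ = {q}) ∧
      ¬ IsSaturated α := by
  classical
  obtain ⟨-, hm0B, hB0le⟩ := h₀
  obtain ⟨-, hm1B, hB1le⟩ := h₁
  have hinc : ¬ m₀ ≤ m₁ ∧ ¬ m₁ ≤ m₀ := hpar m₀ hm0B m₁ hm1B
  have hne : m₀ ≠ m₁ := fun h => hinc.1 (le_of_eq h)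
  set f : α → α := fun x => if x = m₁ then m₀ else x with hf
  have hfm0 : f m₀ = m₀ := if_neg hne
  have hfm1 : f m₁ = m₀ := if_pos rfl
  have hfx : ∀ x, x ≠ m₁ → f x = x := fun x hx => if_neg hx
  set φ : α → Set α := fun p => f '' {x | x ≤ p} with hφ
  have hmemφ : ∀ p x, x ≤ p → f x ∈ φ p := fun p x hx => ⟨x, hx, rfl⟩
  -- key lemma
  have key : ∀ p p' : α, φ p ⊆ φ p' → ∀ x, x ≤ p → x ≤ p' := by
    intro p p' hsub
    have h1 : ∀ x, x ≤ p → x ≠ m₀ → x ≠ m₁ → x ≤ p' := by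
      intro x hx hx0 hx1
      obtain ⟨y, hy, hfy⟩ := hsub (hmemφ p x hx)
      rw [hfx x hx1] at hfy
      by_cases hy1 : y = m₁
      · rw [hy1, hfm1] at hfy; exact absurd hfy hx0.symm
      · rw [hfx y hy1] at hfy; exact hfy ▸ hy
    intro x hx
    by_cases hx1 : x = m₁
    · rw [hx1] at hx ⊢
      obtain ⟨y, hy, hfy⟩ := hsub (hmemφ p m₁ hx)
      rw [hfm1] at hfy
      by_cases hy1 : y = m₁
      · exact hy1 ▸ hy
      · rw [hfx y hy1] at hfy
        rw [hfy] at hy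
        -- y = m₀ ≤ p', m₁ ≤ p; if ¬ m₁ ≤ p' then p' skewly tops
        by_contra hnle
        refine hns ⟨p', Or.inl ⟨hy, hnle, ?_⟩⟩
        rintro b ⟨hbB, hbne⟩
        have hble : b ≤ p := le_trans (hB1le b hbB) hx
        have hb0 : b ≠ m₀ := by
          intro h; exact (hpar m₀ hm0B b hbB).2 (le_of_eq h)
        exact h1 b hble hb0 hbne
    · by_cases hx0 : x = m₀
      · rw [hx0] at hx ⊢
        obtain ⟨y, hy, hfy⟩ := hsub (hmemφ p m₀ hx)
        rw [hfm0] at hfy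
        by_cases hy1 : y = m₁
        · rw [hy1] at hy
          -- m₁ ≤ p', m₀ ≤ p; if ¬ m₀ ≤ p' then p' skewly tops
          by_contra hnle
          refine hns ⟨p', Or.inr ⟨hy, hnle, ?_⟩⟩
          rintro b ⟨hbB, hbne⟩
          have hble : b ≤ p := le_trans (hB0le b hbB) hx
          have hb1 : b ≠ m₁ := by
            intro h; exact (hpar b hbB m₁ hm1B).1 (le_of_eq h)
          exact h1 b hble hbne hb1
        · rw [hfx y hy1] at hfy; exact hfy ▸ hy
      · exact h1 x hx hx0 hx1
  have hsub_iff : ∀ p p' : α, φ p ⊆ φ p' ↔ p ≤ p' := by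
    intro p p'
    constructor
    · intro h; exact key p p' h p le_rfl
    · rintro h q ⟨x, hx, rfl⟩; exact ⟨x, le_trans hx h, rfl⟩
  have hssub_iff : ∀ p p' : α, φ p ⊂ φ p' ↔ p < p' := by
    intro p p'
    rw [Set.ssubset_iff_subset_ne, lt_iff_le_and_ne]
    constructor
    · rintro ⟨hsub, hne'⟩
      refine ⟨(hsub_iff p p').1 hsub, ?_⟩
      rintro rfl; exact hne' rfl
    · rintro ⟨hle, hne'⟩
      refine ⟨(hsub_iff p p').2 hle, ?_⟩
      intro heq
      have := (hsub_iff p' p).1 (le_of_eq heq.symm)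
      exact hne' (le_antisymm hle this)
  have hrep : IsSetRep φ := by
    constructor
    · intro p p' h
      exact le_antisymm ((hsub_iff p p').1 (le_of_eq h))
        ((hsub_iff p' p).1 (le_of_eq h.symm))
    · intro p p'; exact (hssub_iff p p').symm
  have hfinj : ∀ x y, f x = f y → x < y → False := by
    intro x y h hlt
    by_cases hx1 : x = m₁ <;> by_cases hy1 : y = m₁
    · subst hx1; subst hy1; exact lt_irrefl _ hlt
    · subst hx1
      rw [hfm1, hfx y hy1] at h
      subst h; exact hinc.2 (le_of_lt hlt)
    · subst hy1
      rw [hfm1, hfx x hx1] at h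
      subst h; exact hinc.1 (le_of_lt hlt)
    · rw [hfx x hx1, hfx y hy1] at h
      subst h; exact lt_irrefl _ hlt
  have hresid : ∀ p, resid φ p = {f p} := by
    intro p
    ext q
    simp only [resid, Set.mem_diff, Set.mem_iUnion, Set.mem_setOf_eq,
      Set.mem_singleton_iff, exists_prop]
    constructor
    · rintro ⟨⟨x, hx, rfl⟩, hnot⟩
      rcases lt_or_eq_of_le hx with hlt | rfl
      · exact absurd ⟨x, hlt, hmemφ x x le_rfl⟩ hnot
      · rfl
    · rintro rfl
      refine ⟨hmemφ p p le_rfl, ?_⟩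
      rintro ⟨p', hp', y, hy, hfy⟩
      exact hfinj y p hfy (lt_of_le_of_lt hy hp')
  have hpars : IsParsimonious φ := by
    refine ⟨hrep, fun p => ⟨f p, hresid p⟩, ?_⟩
    rintro p q ⟨x, hx, rfl⟩
    exact ⟨x, hx, hresid x⟩
  constructor
  · exact ⟨α, φ, hpars, m₀, by rw [hresid m₀, hfm0], by rw [hresid m₁, hfm1]⟩
  · intro hsat
    have := hsat α φ hpars f hresid
    exact hne (this (hfm0.trans hfm1.symm))

end SatOrder
end

section
/- Let P = (P, ≤_P) be a partial order, let φ be a parsimonious set representation of P, and suppose p₀, p₁ ∈ P are distinct elements with α_φ(p₀) = α_φ(p₁). Then p₀ and p₁ are ≤_P-incomparable and neither p₀ nor p₁ is a minimal element of P. -/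
namespace SatOrder

variable {α Q : Type}

/-- If `φ` is parsimonious and `p₀ ≠ p₁` with `α_φ p₀ = α_φ p₁`, then `p₀`
and `p₁` are incomparable and neither is minimal. -/
theorem incomparable_not_minimal_of_alpha_eq {α Q : Type} [PartialOrder α]
    (φ : α → Set Q) (hφ : IsParsimonious φ) (a : α → Q) (ha : IsAlpha φ a)
    (p₀ p₁ : α) (hne : p₀ ≠ p₁) (heq : a p₀ = a p₁) :
    (¬ p₀ ≤ p₁ ∧ ¬ p₁ ≤ p₀) ∧ (∃ p : α, p < p₀) ∧ (∃ p : α, p < p₁) := by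
  obtain ⟨⟨hinj, hltiff⟩, -, -⟩ := hφ
  have hmem : ∀ p : α, a p ∈ φ p := by
    intro p
    have h : a p ∈ resid φ p := by rw [ha p]; rfl
    exact h.1
  have hlt : ∀ x y : α, x < y → a x ≠ a y := by
    intro x y hxy h
    have hy : a y ∈ resid φ y := by rw [ha y]; rfl
    exact hy.2 (Set.mem_biUnion hxy (h ▸ hmem x))
  have hinc : ¬ p₀ ≤ p₁ ∧ ¬ p₁ ≤ p₀ := by
    constructor
    · intro hle
      exact hlt p₀ p₁ (lt_of_le_of_ne hle hne) heq
    · intro hle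
      exact hlt p₁ p₀ (lt_of_le_of_ne hle hne.symm) heq.symm
  refine ⟨hinc, ?_, ?_⟩
  · by_contra hmin
    push_neg at hmin
    have hres : resid φ p₀ = φ p₀ := by
      unfold resid
      ext q
      simp [Set.mem_setOf_eq, hmin]
    have hsub : φ p₀ ⊆ φ p₁ := by
      rw [← hres, ha p₀]
      intro q hq
      rw [Set.mem_singleton_iff] at hq
      rw [hq, heq]
      exact hmem p₁
    have : p₀ < p₁ := (hltiff p₀ p₁).mpr ⟨hsub, fun h => hne (hinj (le_antisymm hsub h))⟩
    exact hinc.1 this.le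
  · by_contra hmin
    push_neg at hmin
    have hres : resid φ p₁ = φ p₁ := by
      unfold resid
      ext q
      simp [Set.mem_setOf_eq, hmin]
    have hsub : φ p₁ ⊆ φ p₀ := by
      rw [← hres, ha p₁]
      intro q hq
      rw [Set.mem_singleton_iff] at hq
      rw [hq, ← heq]
      exact hmem p₀
    have : p₁ < p₀ := (hltiff p₁ p₀).mpr ⟨hsub, fun h => hne (hinj (le_antisymm h hsub))⟩
    exact hinc.2 this.le

end SatOrder
end

section
/- Let P = (P, ≤_P) be a partial order, let φ be a parsimonious set representation of P, and suppose p₀, p₁ ∈ P are distinct elements with α_φ(p₀) = α_φ(p₁). Then for each i ∈ {0,1} there exists p <_P p_i which is ≤_P-incomparable with p_{1−i}. -/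
namespace SatOrder

variable {α Q : Type}

lemma alpha_mem_phi [PartialOrder α] {φ : α → Set Q} {a : α → Q} (ha : IsAlpha φ a)
    (p : α) : a p ∈ φ p := by
  have h := ha p
  have : a p ∈ resid φ p := by rw [h]; rfl
  exact this.1

lemma not_lt_of_alpha_eq [PartialOrder α] {φ : α → Set Q} {a : α → Q} (ha : IsAlpha φ a)
    {p₀ p₁ : α} (heq : a p₀ = a p₁) : ¬ p₀ < p₁ := by
  intro hlt
  have hmem : a p₁ ∈ resid φ p₁ := by rw [ha p₁]; rfl
  apply hmem.2
  refine Set.mem_biUnion (show p₀ ∈ {x : α | x < p₁} from hlt) ?_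
  rw [← heq]; exact alpha_mem_phi ha p₀

lemma one_side [PartialOrder α] {φ : α → Set Q} (hφ : IsParsimonious φ) {a : α → Q}
    (ha : IsAlpha φ a) {p₀ p₁ : α} (hne : p₀ ≠ p₁) (heq : a p₀ = a p₁) :
    ∃ p : α, p < p₀ ∧ ¬ p ≤ p₁ ∧ ¬ p₁ ≤ p := by
  obtain ⟨⟨hinj, hlt⟩, _, hcov⟩ := hφ
  -- φ p₀ ⊄ φ p₁, so there is q' ∈ φ p₀ \ φ p₁
  have hnotsub : ¬ φ p₀ ⊆ φ p₁ := by
    intro hsub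
    exact not_lt_of_alpha_eq ha heq ((hlt p₀ p₁).mpr ⟨hsub, fun h => hne (hinj (hsub.antisymm h))⟩)
  obtain ⟨q', hq'0, hq'1⟩ := Set.not_subset.mp hnotsub
  obtain ⟨p, hpp₀, hres⟩ := hcov p₀ q' hq'0
  have hap : a p = q' := by
    have := ha p; rw [this] at hres
    exact (Set.singleton_eq_singleton_iff.mp hres.symm).symm
  have hpne : p ≠ p₀ := by
    intro h; subst h
    exact hq'1 (by rw [← hap, heq]; exact alpha_mem_phi ha p₁)
  have hplt : p < p₀ := lt_of_le_of_ne hpp₀ hpne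
  refine ⟨p, hplt, ?_, ?_⟩
  · intro hle
    rcases eq_or_lt_of_le hle with h | h
    · subst h; exact hq'1 (by rw [← hap]; exact alpha_mem_phi ha p)
    · exact hq'1 (((hlt p p₁).mp h).1 (by rw [← hap]; exact alpha_mem_phi ha p))
  · intro hle
    exact not_lt_of_alpha_eq ha heq.symm (lt_of_le_of_lt hle hplt)

/-- If `φ` is parsimonious and `p₀ ≠ p₁` with `α_φ p₀ = α_φ p₁`, then for each
`i` there exists `p < p_i` incomparable with `p_{1-i}`. -/
theorem exists_incomparable_predecessor_of_alpha_eq {α Q : Type} [PartialOrder α]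
    (φ : α → Set Q) (hφ : IsParsimonious φ) (a : α → Q) (ha : IsAlpha φ a)
    (p₀ p₁ : α) (hne : p₀ ≠ p₁) (heq : a p₀ = a p₁) :
    (∃ p : α, p < p₀ ∧ ¬ p ≤ p₁ ∧ ¬ p₁ ≤ p) ∧
      (∃ p : α, p < p₁ ∧ ¬ p ≤ p₀ ∧ ¬ p₀ ≤ p) := by
  exact ⟨one_side hφ ha hne heq, one_side hφ ha hne.symm heq.symm⟩

end SatOrder
end

section
/- Every linear order is saturated; that is, if L = (L, ≤_L) is a linear order, then for every parsimonious set representation φ of L the map α_φ is injective. -/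
namespace SatOrder

variable {α Q : Type}

lemma key {L : Type} [LinearOrder L] {Q : Type} {φ : L → Set Q} {a : L → Q}
    (ha : IsAlpha φ a) {p p' : L} (hlt : p < p') : a p ≠ a p' := by
  intro h
  have hmem : a p ∈ φ p := by
    have : a p ∈ resid φ p := by rw [ha p]; rfl
    exact this.1
  have h2 : a p' ∈ resid φ p' := by rw [ha p']; rfl
  exact h2.2 (Set.mem_biUnion hlt (h ▸ hmem))

/-- Every linear order is saturated: for every parsimonious set representation
`φ` of a linear order, `α_φ` is injective. -/
theorem linearOrder_isSaturated {L : Type} [LinearOrder L] : IsSaturated L := by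
  intro Q φ hpar a ha p p' hpp'
  rcases lt_trichotomy p p' with h | h | h
  · exact absurd hpp' (key ha h)
  · exact h
  · exact absurd hpp'.symm (key ha h)

end SatOrder
end

section
/- There exists a countable partial order P = (P, ≤_P) in which every two parallel fans are skewly topped, but which contains two parallel bouquets that are not skewly topped; in particular, P is not saturated. -/
namespace SatOrder

variable {α Q : Type}

variable {P : Type}

/-- The strict order associated with a relation `le`. -/
def rlt (le : P → P → Prop) (a b : P) : Prop := le a b ∧ ¬ le b a

/-- A bouquet with maximum `m`, with respect to the order relation `le`. -/
def IsBouquetR (le : P → P → Prop) (B : Set P) (m : P) : Prop :=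
  B.Nontrivial ∧ m ∈ B ∧ ∀ b ∈ B, le b m

/-- A fan with maximum `m`, with respect to the order relation `le`. -/
def IsFanR (le : P → P → Prop) (F : Set P) (m : P) : Prop :=
  IsBouquetR le F m ∧ ∀ b ∈ F \ {m}, ∀ b' ∈ F \ {m}, le b b' → b = b'

/-- Parallel sets with respect to the order relation `le`. -/
def ParallelR (le : P → P → Prop) (B₀ B₁ : Set P) : Prop :=
  ∀ b₀ ∈ B₀, ∀ b₁ ∈ B₁, ¬ le b₀ b₁ ∧ ¬ le b₁ b₀

/-- `m` skewly tops `B₀, B₁` (with maxima `m₀, m₁`), with respect to `le`. -/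
def SkewlyTopsR (le : P → P → Prop) (m : P) (B₀ B₁ : Set P) (m₀ m₁ : P) : Prop :=
  (le m₀ m ∧ ¬ le m₁ m ∧ ∀ p ∈ B₁ \ {m₁}, le p m) ∨
  (le m₁ m ∧ ¬ le m₀ m ∧ ∀ p ∈ B₀ \ {m₀}, le p m)

/-- `B₀` and `B₁` (with maxima `m₀, m₁`) are skewly topped, with respect to `le`. -/
def SkewlyToppedR (le : P → P → Prop) (B₀ B₁ : Set P) (m₀ m₁ : P) : Prop :=
  ∃ m : P, SkewlyTopsR le m B₀ B₁ m₀ m₁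

/-- A set representation with respect to the order relation `le`. -/
def IsSetRepR (le : P → P → Prop) (φ : P → Set Q) : Prop :=
  Function.Injective φ ∧ ∀ p p' : P, rlt le p p' ↔ φ p ⊂ φ p'

/-- The residual set `φ p − ⋃_{p' < p} φ p'`, with respect to `le`. -/
def residR (le : P → P → Prop) (φ : P → Set Q) (p : P) : Set Q :=
  φ p \ ⋃ p' ∈ {x : P | rlt le x p}, φ p'

/-- A parsimonious set representation with respect to `le`. -/
def IsParsimoniousR (le : P → P → Prop) (φ : P → Set Q) : Prop :=
  IsSetRepR le φ ∧ (∀ p : P, ∃ q : Q, residR le φ p = {q}) ∧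
    (∀ p : P, ∀ q ∈ φ p, ∃ p' : P, le p' p ∧ residR le φ p' = {q})

/-- Saturation with respect to the order relation `le`. -/
def IsSaturatedR (le : P → P → Prop) : Prop :=
  ∀ (Q : Type) (φ : P → Set Q), IsParsimoniousR le φ →
    ∀ a : P → Q, (∀ p : P, residR le φ p = {a p}) → Function.Injective a

/-! ### Auxiliary construction -/

inductive Pt where
  | a : ℕ → Pt
  | b : ℕ → Pt
  | c : Pt
  | d : Pt
  | v : ℕ → Pt
  | u : ℕ → Pt
  deriving DecidableEq

namespace Pt

def ple : Pt → Pt → Prop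
  | .a i, .a j => i ≤ j
  | .a _, .c => True
  | .a i, .v m => i ≤ m
  | .a _, .u _ => True
  | .b i, .b j => i ≤ j
  | .b _, .d => True
  | .b _, .v _ => True
  | .b _, .u _ => True
  | .c, .c => True
  | .c, .u _ => True
  | .d, .d => True
  | .d, .v _ => True
  | .d, .u _ => True
  | .v m, .v m' => m ≤ m'
  | .v m, .u n => m < n
  | .u n, .u n' => n ≤ n'
  | _, _ => False

lemma ple_refl (x : Pt) : ple x x := by cases x <;> simp [ple]

lemma ple_trans : ∀ {x y z : Pt}, ple x y → ple y z → ple x z := by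
  intro x y z hxy hyz
  cases x <;> cases y <;> cases z <;> simp_all [ple] <;> omega

lemma ple_antisymm : ∀ {x y : Pt}, ple x y → ple y x → x = y := by
  intro x y hxy hyx
  cases x <;> cases y <;> simp_all [ple] <;> omega

def code : Pt → ℕ × ℕ
  | .a n => (0, n)
  | .b n => (1, n)
  | .c => (2, 0)
  | .d => (3, 0)
  | .v n => (4, n)
  | .u n => (5, n)

lemma code_inj : Function.Injective code := by
  intro x y h
  cases x <;> cases y <;> simp_all [code]

instance : Countable Pt := Function.Injective.countable code_inj

end Pt

open Pt in
lemma fan_eq {F : Set Pt} {m : Pt} (hF : IsFanR Pt.ple F m) {x p : Pt}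
    (hx : x ∈ F) (hxm : x ≠ m) (hp : p ∈ F) (hpm : p ≠ m)
    (hcomp : Pt.ple p x ∨ Pt.ple x p) : p = x := by
  rcases hcomp with h | h
  · exact hF.2 p ⟨hp, by simpa using hpm⟩ x ⟨hx, by simpa using hxm⟩ h
  · exact (hF.2 x ⟨hx, by simpa using hxm⟩ p ⟨hp, by simpa using hpm⟩ h).symm

lemma aside_all {F : Set Pt} {m : Pt} (hF : IsFanR Pt.ple F m) {i : ℕ}
    (hx : Pt.a i ∈ F) (hxm : Pt.a i ≠ m)
    (hm : (∃ j, m = Pt.a j) ∨ m = Pt.c) :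
    ∀ p ∈ F \ {m}, Pt.ple p (Pt.v i) := by
  rintro p ⟨hp, hpm⟩
  simp only [Set.mem_singleton_iff] at hpm
  have hple : Pt.ple p m := hF.1.2.2 p hp
  have hsh : ∃ k, p = Pt.a k := by
    rcases hm with ⟨j, rfl⟩ | rfl <;> cases p <;> simp_all [Pt.ple]
  obtain ⟨k, rfl⟩ := hsh
  have heq : Pt.a k = Pt.a i := by
    refine fan_eq hF hx hxm hp hpm ?_
    rcases Nat.le_total k i with h | h
    · exact Or.inl h
    · exact Or.inr h
  rw [heq]
  show i ≤ i; exact le_rfl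

lemma vside_all {F : Set Pt} {m m' n : ℕ} (hF : IsFanR Pt.ple F (Pt.v m))
    (hx : Pt.v m' ∈ F) (hxm : Pt.v m' ≠ Pt.v m)
    (hno : ∀ p ∈ F, ¬ Pt.ple p (Pt.u n)) :
    ∀ p ∈ F \ {Pt.v m}, Pt.ple p (Pt.u (m' + 1)) := by
  rintro p ⟨hp, hpm⟩
  simp only [Set.mem_singleton_iff] at hpm
  have hple : Pt.ple p (Pt.v m) := hF.1.2.2 p hp
  have hnp := hno p hp
  have hsh : ∃ k, p = Pt.v k := by
    cases p <;> simp_all [Pt.ple]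
  obtain ⟨k, rfl⟩ := hsh
  have heq : Pt.v k = Pt.v m' := by
    refine fan_eq hF hx hxm hp hpm ?_
    rcases Nat.le_total k m' with h | h
    · exact Or.inl h
    · exact Or.inr h
  rw [heq]
  show m' < m' + 1; omega

lemma fans_topped (F₀ F₁ : Set Pt) (m₀ m₁ : Pt)
    (h₀ : IsFanR Pt.ple F₀ m₀) (h₁ : IsFanR Pt.ple F₁ m₁)
    (hpar : ParallelR Pt.ple F₀ F₁) : SkewlyToppedR Pt.ple F₀ F₁ m₀ m₁ := by
  obtain ⟨x, hxF, hxm⟩ := h₀.1.1.exists_ne m₀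
  obtain ⟨y, hyF, hym⟩ := h₁.1.1.exists_ne m₁
  have hxle : Pt.ple x m₀ := h₀.1.2.2 x hxF
  have hyle : Pt.ple y m₁ := h₁.1.2.2 y hyF
  have hmm := hpar m₀ h₀.1.2.1 m₁ h₁.1.2.1
  have hxm₁ := hpar x hxF m₁ h₁.1.2.1
  have hm₀y := hpar m₀ h₀.1.2.1 y hyF
  rcases hj : m₀ with j | j | _ | _ | j | j <;> rcases hl : m₁ with l | l | _ | _ | l | l <;>
    subst hj <;> subst hl
  · exfalso; obtain ⟨h1, h2⟩ := hmm; simp only [Pt.ple] at h1 h2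
    first | exact h1 trivial | exact h2 trivial | omega
  · obtain ⟨i, rfl⟩ : ∃ i, x = Pt.a i := by cases x <;> simp_all [Pt.ple]
    refine ⟨Pt.v i, Or.inr ⟨trivial, ?_, aside_all h₀ hxF hxm (Or.inl ⟨j, rfl⟩)⟩⟩
    have h1 : i ≤ j := hxle
    have h2 : i ≠ j := by simpa using hxm
    show ¬ (j ≤ i); omega
  · exfalso; obtain ⟨h1, h2⟩ := hmm; simp only [Pt.ple] at h1 h2
    first | exact h1 trivial | exact h2 trivial | omega
  · obtain ⟨i, rfl⟩ : ∃ i, x = Pt.a i := by cases x <;> simp_all [Pt.ple]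
    refine ⟨Pt.v i, Or.inr ⟨trivial, ?_, aside_all h₀ hxF hxm (Or.inl ⟨j, rfl⟩)⟩⟩
    have h1 : i ≤ j := hxle
    have h2 : i ≠ j := by simpa using hxm
    show ¬ (j ≤ i); omega
  · obtain ⟨i, rfl⟩ : ∃ i, x = Pt.a i := by cases x <;> simp_all [Pt.ple]
    have h3 : ¬ (i ≤ l) := hxm₁.1
    refine ⟨Pt.v i, Or.inr ⟨?_, ?_, aside_all h₀ hxF hxm (Or.inl ⟨j, rfl⟩)⟩⟩
    · show l ≤ i; omega
    · have h1 : i ≤ j := hxle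
      have h2 : i ≠ j := by simpa using hxm
      show ¬ (j ≤ i); omega
  · exfalso; obtain ⟨h1, h2⟩ := hmm; simp only [Pt.ple] at h1 h2
    first | exact h1 trivial | exact h2 trivial | omega
  · obtain ⟨i, rfl⟩ : ∃ i, y = Pt.a i := by cases y <;> simp_all [Pt.ple]
    refine ⟨Pt.v i, Or.inl ⟨trivial, ?_, aside_all h₁ hyF hym (Or.inl ⟨l, rfl⟩)⟩⟩
    have h1 : i ≤ l := hyle
    have h2 : i ≠ l := by simpa using hym
    show ¬ (l ≤ i); omega
  · exfalso; obtain ⟨h1, h2⟩ := hmm; simp only [Pt.ple] at h1 h2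
    first | exact h1 trivial | exact h2 trivial | omega
  · obtain ⟨i, rfl⟩ : ∃ i, y = Pt.a i := by cases y <;> simp_all [Pt.ple]
    refine ⟨Pt.v i, Or.inl ⟨trivial, ?_, aside_all h₁ hyF hym (Or.inr rfl)⟩⟩
    show ¬ False; simp
  · exfalso; obtain ⟨h1, h2⟩ := hmm; simp only [Pt.ple] at h1 h2
    first | exact h1 trivial | exact h2 trivial | omega
  · exfalso; obtain ⟨h1, h2⟩ := hmm; simp only [Pt.ple] at h1 h2
    first | exact h1 trivial | exact h2 trivial | omega
  · exfalso; obtain ⟨h1, h2⟩ := hmm; simp only [Pt.ple] at h1 h2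
    first | exact h1 trivial | exact h2 trivial | omega
  · exfalso; obtain ⟨h1, h2⟩ := hmm; simp only [Pt.ple] at h1 h2
    first | exact h1 trivial | exact h2 trivial | omega
  · obtain ⟨i, rfl⟩ : ∃ i, x = Pt.a i := by cases x <;> simp_all [Pt.ple]
    refine ⟨Pt.v i, Or.inr ⟨trivial, ?_, aside_all h₀ hxF hxm (Or.inr rfl)⟩⟩
    show ¬ False; simp
  · exfalso; obtain ⟨h1, h2⟩ := hmm; simp only [Pt.ple] at h1 h2
    first | exact h1 trivial | exact h2 trivial | omega
  · obtain ⟨i, rfl⟩ : ∃ i, x = Pt.a i := by cases x <;> simp_all [Pt.ple]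
    refine ⟨Pt.v i, Or.inr ⟨trivial, ?_, aside_all h₀ hxF hxm (Or.inr rfl)⟩⟩
    show ¬ False; simp
  · obtain ⟨i, rfl⟩ : ∃ i, x = Pt.a i := by cases x <;> simp_all [Pt.ple]
    have h3 : ¬ (i ≤ l) := hxm₁.1
    refine ⟨Pt.v i, Or.inr ⟨?_, ?_, aside_all h₀ hxF hxm (Or.inr rfl)⟩⟩
    · show l ≤ i; omega
    · show ¬ False; simp
  · exfalso; obtain ⟨h1, h2⟩ := hmm; simp only [Pt.ple] at h1 h2
    first | exact h1 trivial | exact h2 trivial | omega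
  · obtain ⟨i, rfl⟩ : ∃ i, y = Pt.a i := by cases y <;> simp_all [Pt.ple]
    refine ⟨Pt.v i, Or.inl ⟨trivial, ?_, aside_all h₁ hyF hym (Or.inl ⟨l, rfl⟩)⟩⟩
    have h1 : i ≤ l := hyle
    have h2 : i ≠ l := by simpa using hym
    show ¬ (l ≤ i); omega
  · exfalso; obtain ⟨h1, h2⟩ := hmm; simp only [Pt.ple] at h1 h2
    first | exact h1 trivial | exact h2 trivial | omega
  · obtain ⟨i, rfl⟩ : ∃ i, y = Pt.a i := by cases y <;> simp_all [Pt.ple]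
    refine ⟨Pt.v i, Or.inl ⟨trivial, ?_, aside_all h₁ hyF hym (Or.inr rfl)⟩⟩
    show ¬ False; simp
  · exfalso; obtain ⟨h1, h2⟩ := hmm; simp only [Pt.ple] at h1 h2
    first | exact h1 trivial | exact h2 trivial | omega
  · exfalso; obtain ⟨h1, h2⟩ := hmm; simp only [Pt.ple] at h1 h2
    first | exact h1 trivial | exact h2 trivial | omega
  · exfalso; obtain ⟨h1, h2⟩ := hmm; simp only [Pt.ple] at h1 h2
    first | exact h1 trivial | exact h2 trivial | omega
  · obtain ⟨i, rfl⟩ : ∃ i, y = Pt.a i := by cases y <;> simp_all [Pt.ple]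
    have h3 : ¬ (i ≤ j) := hm₀y.2
    refine ⟨Pt.v i, Or.inl ⟨?_, ?_, aside_all h₁ hyF hym (Or.inl ⟨l, rfl⟩)⟩⟩
    · show j ≤ i; omega
    · have h1 : i ≤ l := hyle
      have h2 : i ≠ l := by simpa using hym
      show ¬ (l ≤ i); omega
  · exfalso; obtain ⟨h1, h2⟩ := hmm; simp only [Pt.ple] at h1 h2
    first | exact h1 trivial | exact h2 trivial | omega
  · obtain ⟨i, rfl⟩ : ∃ i, y = Pt.a i := by cases y <;> simp_all [Pt.ple]
    have h3 : ¬ (i ≤ j) := hm₀y.2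
    refine ⟨Pt.v i, Or.inl ⟨?_, ?_, aside_all h₁ hyF hym (Or.inr rfl)⟩⟩
    · show j ≤ i; omega
    · show ¬ False; simp
  · exfalso; obtain ⟨h1, h2⟩ := hmm; simp only [Pt.ple] at h1 h2
    first | exact h1 trivial | exact h2 trivial | omega
  · exfalso; obtain ⟨h1, h2⟩ := hmm; simp only [Pt.ple] at h1 h2
    first | exact h1 trivial | exact h2 trivial | omega
  · have hx1 : ¬ Pt.ple x (Pt.u l) := hxm₁.1
    obtain ⟨k, rfl⟩ : ∃ k, x = Pt.v k := by cases x <;> simp_all [Pt.ple]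
    refine ⟨Pt.u (k+1), Or.inr ⟨?_, ?_,
      vside_all (n := l) h₀ hxF hxm (fun p hp => (hpar p hp (Pt.u l) h₁.1.2.1).1)⟩⟩
    · have h1 : ¬ (k < l) := hx1
      show l ≤ k + 1; omega
    · have h2 : k ≤ j := hxle
      have h3 : k ≠ j := by simpa using hxm
      show ¬ (j < k + 1); omega
  · exfalso; obtain ⟨h1, h2⟩ := hmm; simp only [Pt.ple] at h1 h2
    first | exact h1 trivial | exact h2 trivial | omega
  · exfalso; obtain ⟨h1, h2⟩ := hmm; simp only [Pt.ple] at h1 h2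
    first | exact h1 trivial | exact h2 trivial | omega
  · exfalso; obtain ⟨h1, h2⟩ := hmm; simp only [Pt.ple] at h1 h2
    first | exact h1 trivial | exact h2 trivial | omega
  · exfalso; obtain ⟨h1, h2⟩ := hmm; simp only [Pt.ple] at h1 h2
    first | exact h1 trivial | exact h2 trivial | omega
  · have hy1 : ¬ Pt.ple y (Pt.u j) := hm₀y.2
    obtain ⟨k, rfl⟩ : ∃ k, y = Pt.v k := by cases y <;> simp_all [Pt.ple]
    refine ⟨Pt.u (k+1), Or.inl ⟨?_, ?_,
      vside_all (n := j) h₁ hyF hym (fun p hp => (hpar (Pt.u j) h₀.1.2.1 p hp).2)⟩⟩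
    · have h1 : ¬ (k < j) := hy1
      show j ≤ k + 1; omega
    · have h2 : k ≤ l := hyle
      have h3 : k ≠ l := by simpa using hym
      show ¬ (l < k + 1); omega
  · exfalso; obtain ⟨h1, h2⟩ := hmm; simp only [Pt.ple] at h1 h2
    first | exact h1 trivial | exact h2 trivial | omega

/-! ### The two parallel bouquets that are not skewly topped -/

def B₀ : Set Pt := {p | (∃ n, p = Pt.a n) ∨ p = Pt.c}
def B₁ : Set Pt := {p | (∃ n, p = Pt.b n) ∨ p = Pt.d}

lemma bouquet₀ : IsBouquetR Pt.ple B₀ Pt.c := by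
  refine ⟨⟨Pt.a 0, Or.inl ⟨0, rfl⟩, Pt.c, Or.inr rfl, by simp⟩, Or.inr rfl, ?_⟩
  rintro p (⟨n, rfl⟩ | rfl) <;> trivial

lemma bouquet₁ : IsBouquetR Pt.ple B₁ Pt.d := by
  refine ⟨⟨Pt.b 0, Or.inl ⟨0, rfl⟩, Pt.d, Or.inr rfl, by simp⟩, Or.inr rfl, ?_⟩
  rintro p (⟨n, rfl⟩ | rfl) <;> trivial

lemma bouquets_parallel : ParallelR Pt.ple B₀ B₁ := by
  rintro p (⟨n, rfl⟩ | rfl) q (⟨k, rfl⟩ | rfl) <;> simp [Pt.ple]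

lemma bouquets_not_topped : ¬ SkewlyToppedR Pt.ple B₀ B₁ Pt.c Pt.d := by
  rintro ⟨m, ⟨h1, h2, h3⟩ | ⟨h1, h2, h3⟩⟩
  · cases m with
    | a n => exact h1
    | b n => exact h1
    | c => exact h3 (Pt.b 0) ⟨Or.inl ⟨0, rfl⟩, by simp⟩
    | d => exact h1
    | v n => exact h1
    | u n => exact h2 trivial
  · cases m with
    | a n => exact h1
    | b n => exact h1
    | c => exact h1
    | d => exact h3 (Pt.a 0) ⟨Or.inl ⟨0, rfl⟩, by simp⟩
    | v n =>
        have := h3 (Pt.a (n+1)) ⟨Or.inl ⟨n+1, rfl⟩, by simp⟩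
        have hn : n + 1 ≤ n := this
        omega
    | u n => exact h2 trivial

/-! ### Non-saturation -/

def pr : Pt → Pt
  | .d => .c
  | x => x

lemma pr_eq_iff {x y : Pt} : pr x = pr y ↔
    x = y ∨ (x = Pt.c ∧ y = Pt.d) ∨ (x = Pt.d ∧ y = Pt.c) := by
  cases x <;> cases y <;> simp [pr]

def φ (p : Pt) : Set Pt := pr '' {x | Pt.ple x p}

lemma phi_mono {p p' : Pt} (h : Pt.ple p p') : φ p ⊆ φ p' := by
  rintro q ⟨x, hx, rfl⟩
  exact ⟨x, Pt.ple_trans hx h, rfl⟩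

lemma all_b_le {p : Pt} (hb : ∀ n, Pt.ple (Pt.b n) p) (hc : Pt.ple Pt.c p) :
    Pt.ple Pt.d p := by
  cases p with
  | a n => exact hc
  | b n => exact hc
  | c => exact hb 0
  | d => trivial
  | v n => trivial
  | u n => trivial

lemma all_a_le {p : Pt} (ha : ∀ n, Pt.ple (Pt.a n) p) (hd : Pt.ple Pt.d p) :
    Pt.ple Pt.c p := by
  cases p with
  | a n => exact hd
  | b n => exact hd
  | c => trivial
  | d => exact ha 0
  | v n =>
      have := ha (n+1)
      have hn : n + 1 ≤ n := this
      omega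
  | u n => trivial

lemma le_of_phi_subset {p p' : Pt} (h : φ p ⊆ φ p') : Pt.ple p p' := by
  obtain ⟨y, hy, hyp⟩ := h ⟨p, Pt.ple_refl p, rfl⟩
  rcases pr_eq_iff.1 hyp with rfl | ⟨rfl, rfl⟩ | ⟨rfl, rfl⟩
  · exact hy
  · -- y = c ≤ p', p = d : show d ≤ p'
    have hb : ∀ n, Pt.ple (Pt.b n) p' := by
      intro n
      obtain ⟨z, hz, hzb⟩ := h ⟨Pt.b n, trivial, rfl⟩
      rcases pr_eq_iff.1 hzb with rfl | ⟨rfl, hb⟩ | ⟨rfl, hb⟩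
      · exact hz
      · exact absurd hb (by simp)
      · exact absurd hb (by simp)
    exact all_b_le hb hy
  · -- y = d ≤ p', p = c : show c ≤ p'
    have ha : ∀ n, Pt.ple (Pt.a n) p' := by
      intro n
      obtain ⟨z, hz, hza⟩ := h ⟨Pt.a n, trivial, rfl⟩
      rcases pr_eq_iff.1 hza with rfl | ⟨rfl, hb⟩ | ⟨rfl, hb⟩
      · exact hz
      · exact absurd hb (by simp)
      · exact absurd hb (by simp)
    exact all_a_le ha hy

lemma phi_subset_iff {p p' : Pt} : φ p ⊆ φ p' ↔ Pt.ple p p' :=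
  ⟨le_of_phi_subset, phi_mono⟩

lemma resid_phi (p : Pt) : residR Pt.ple φ p = {pr p} := by
  ext q
  simp only [residR, Set.mem_diff, Set.mem_iUnion, Set.mem_setOf_eq,
    Set.mem_singleton_iff]
  constructor
  · rintro ⟨⟨z, hz, rfl⟩, hq⟩
    by_cases hzp : z = p
    · rw [hzp]
    · exfalso
      refine hq ⟨z, ⟨hz, fun hpz => hzp (Pt.ple_antisymm hz hpz)⟩, ?_⟩
      exact ⟨z, Pt.ple_refl z, rfl⟩
  · rintro rfl
    refine ⟨⟨p, Pt.ple_refl p, rfl⟩, ?_⟩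
    rintro ⟨x, ⟨hxp, hpx⟩, z, hzx, hzp⟩
    rcases pr_eq_iff.1 hzp with rfl | ⟨rfl, rfl⟩ | ⟨rfl, rfl⟩
    · exact hpx hzx
    · -- z = c ≤ x, p = d, x < d : impossible
      cases x <;> simp_all [Pt.ple]
    · -- z = d ≤ x, p = c, x < c : impossible
      cases x <;> simp_all [Pt.ple]

lemma phi_parsimonious : IsParsimoniousR Pt.ple φ := by
  refine ⟨⟨?_, ?_⟩, fun p => ⟨pr p, resid_phi p⟩, ?_⟩
  · intro p p' h
    exact Pt.ple_antisymm (le_of_phi_subset h.le) (le_of_phi_subset h.ge)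
  · intro p p'
    rw [Set.ssubset_iff_subset_ne]
    constructor
    · rintro ⟨h1, h2⟩
      refine ⟨phi_mono h1, fun he => h2 ?_⟩
      exact le_of_phi_subset he.ge
    · rintro ⟨h1, h2⟩
      refine ⟨le_of_phi_subset h1, fun hle => h2 ?_⟩
      exact Set.Subset.antisymm h1 (phi_mono hle)
  · rintro p q ⟨z, hz, rfl⟩
    exact ⟨z, hz, resid_phi z⟩

lemma not_saturated : ¬ IsSaturatedR Pt.ple := by
  intro h
  have hinj := h Pt φ phi_parsimonious pr resid_phi
  have : Pt.c = Pt.d := hinj (show pr Pt.c = pr Pt.d from rfl)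
  simp at this


/-- There is a countable partial order in which every two parallel fans are
skewly topped but which contains two parallel bouquets that are not skewly topped; in
particular it is not saturated. -/
theorem exists_countable_fans_topped_not_bouquets_topped :
    ∃ (P : Type) (le : P → P → Prop), Countable P ∧ IsPartialOrder P le ∧
      (∀ (F₀ F₁ : Set P) (m₀ m₁ : P), IsFanR le F₀ m₀ → IsFanR le F₁ m₁ →
        ParallelR le F₀ F₁ → SkewlyToppedR le F₀ F₁ m₀ m₁) ∧
      (∃ (B₀ B₁ : Set P) (m₀ m₁ : P), IsBouquetR le B₀ m₀ ∧ IsBouquetR le B₁ m₁ ∧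
        ParallelR le B₀ B₁ ∧ ¬ SkewlyToppedR le B₀ B₁ m₀ m₁) ∧
      ¬ IsSaturatedR le := by
  refine ⟨Pt, Pt.ple, inferInstance, ?_, fans_topped,
    ⟨B₀, B₁, Pt.c, Pt.d, bouquet₀, bouquet₁, bouquets_parallel, bouquets_not_topped⟩,
    not_saturated⟩
  exact { refl := Pt.ple_refl, trans := fun _ _ _ => Pt.ple_trans,
          antisymm := fun _ _ => Pt.ple_antisymm }

end SatOrder
end

section
/- A finite partial order P = (P, ≤_P) is saturated if and only if every two parallel fans in P are skewly topped. -/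
namespace SatOrder

variable {α Q : Type}

/-- Parsimonious in the finite-cardinality sense: `|φ p| = |⋃_{p' < p} φ p'| + 1`. -/
def IsParsimoniousFin [PartialOrder α] (φ : α → Set Q) : Prop :=
  ∀ p : α, (φ p).ncard = (⋃ p' ∈ {x : α | x < p}, φ p').ncard + 1

/-- Saturated in the finite-cardinality sense: `|P| = |⋃_{p} φ p|` for every parsimonious
set representation. -/
def IsSaturatedFin (α : Type) [PartialOrder α] : Prop :=
  ∀ (Q : Type) (φ : α → Set Q), IsSetRep φ → IsParsimoniousFin φ →
    Nat.card α = (⋃ p : α, φ p).ncard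

/-- A finite partial order is saturated iff every two parallel fans in it are
skewly topped. -/
theorem finite_saturated_iff_fans_topped {α : Type} [PartialOrder α] [Finite α] :
    IsSaturatedFin α ↔
      ∀ (F₀ F₁ : Set α) (m₀ m₁ : α), IsFan F₀ m₀ → IsFan F₁ m₁ → ParallelB F₀ F₁ →
        SkewlyTopped F₀ F₁ m₀ m₁ := by
  classical
  constructor
  · -- saturated → fans skewly topped
    intro hsat F₀ F₁ m₀ m₁ hF₀ hF₁ hpar
    by_contra hnst
    obtain ⟨hm01, hm10⟩ := hpar m₀ hF₀.1.2.1 m₁ hF₁.1.2.1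
    have hne : m₀ ≠ m₁ := fun h => hm01 (h ▸ le_refl m₀)
    set φ : α → Set α := fun p => {q | (q ≤ p ∧ q ≠ m₁) ∨ (q = m₀ ∧ m₁ ≤ p)} with hφ
    have mono : ∀ {p p' : α}, p ≤ p' → φ p ⊆ φ p' := by
      intro p p' h q hq
      rcases hq with ⟨h1, h2⟩ | ⟨h1, h2⟩
      · exact Or.inl ⟨h1.trans h, h2⟩
      · exact Or.inr ⟨h1, h2.trans h⟩
    have key : ∀ p p' : α, φ p ⊆ φ p' → p ≤ p' := by
      intro p p' hss
      by_cases hp : p = m₁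
      · rw [hp] at hss ⊢
        have hm0 : m₀ ∈ φ m₁ := Or.inr ⟨rfl, le_refl _⟩
        rcases hss hm0 with ⟨h1, _⟩ | ⟨_, h2⟩
        · -- m₀ ≤ p'; if ¬ m₁ ≤ p' we get a skew top
          by_cases hm1p : m₁ ≤ p'
          · exact hm1p
          · exfalso
            refine hnst ⟨p', Or.inl ⟨h1, hm1p, ?_⟩⟩
            intro b hb
            have hbm : b ≤ m₁ := hF₁.1.2.2 b hb.1
            have hbne : b ≠ m₁ := hb.2
            have : b ∈ φ m₁ := Or.inl ⟨hbm, hbne⟩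
            rcases hss this with ⟨h3, _⟩ | ⟨_, h4⟩
            · exact h3
            · exact absurd h4 hm1p
        · exact h2
      · have hpp : p ∈ φ p := Or.inl ⟨le_refl _, hp⟩
        rcases hss hpp with ⟨h1, _⟩ | ⟨h1, h2⟩
        · exact h1
        · rw [h1] at hss ⊢
          by_cases hm0p : m₀ ≤ p'
          · exact hm0p
          · exfalso
            refine hnst ⟨p', Or.inr ⟨h2, hm0p, ?_⟩⟩
            intro b hb
            have hbm : b ≤ m₀ := hF₀.1.2.2 b hb.1
            have hbne : b ≠ m₀ := hb.2
            have hbm1 : b ≠ m₁ := by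
              rintro rfl; exact hm10 hbm
            have : b ∈ φ m₀ := Or.inl ⟨hbm, hbm1⟩
            rcases hss this with ⟨h3, _⟩ | ⟨h3, _⟩
            · exact h3
            · exact absurd h3 hbne
    have setrep : IsSetRep φ := by
      constructor
      · intro p p' h
        exact le_antisymm (key _ _ h.le) (key _ _ h.ge)
      · intro p p'
        constructor
        · intro h
          rw [Set.ssubset_iff_subset_ne]
          refine ⟨mono h.le, fun he => h.ne ?_⟩
          exact le_antisymm h.le (key _ _ he.ge.subset)
        · intro h
          refine lt_of_le_of_ne (key _ _ h.subset) (fun he => ?_)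
          exact h.ne (he ▸ rfl)
    have parsfin : IsParsimoniousFin φ := by
      intro p
      set V : Set α := ⋃ p' ∈ {x : α | x < p}, φ p' with hV
      have hVmem : ∀ q : α, q ∈ V ↔ ∃ p' : α, p' < p ∧ q ∈ φ p' := by
        intro q; simp [hV]
      set g : α := if p = m₁ then m₀ else p with hg
      have hgmem : g ∈ φ p := by
        by_cases hp : p = m₁
        · have hgm : g = m₀ := by simp only [hg, if_pos hp]
          rw [hgm, hp]
          exact Or.inr ⟨rfl, le_refl _⟩
        · have hgm : g = p := by simp only [hg, if_neg hp]
          rw [hgm]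
          exact Or.inl ⟨le_refl _, hp⟩
      have hgnot : g ∉ V := by
        intro hgV
        obtain ⟨p', hp', hq⟩ := (hVmem g).mp hgV
        by_cases hp : p = m₁
        · have hgm : g = m₀ := by simp only [hg, if_pos hp]
          rw [hgm] at hq
          rw [hp] at hp'
          rcases hq with ⟨h1, _⟩ | ⟨_, h2⟩
          · exact hm01 (h1.trans hp'.le)
          · exact absurd (h2.trans_lt hp') (lt_irrefl m₁)
        · have hgm : g = p := by simp only [hg, if_neg hp]
          rw [hgm] at hq
          rcases hq with ⟨h1, _⟩ | ⟨h1, h2⟩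
          · exact absurd (h1.trans_lt hp') (lt_irrefl p)
          · rw [h1] at hp'
            exact hm10 (h2.trans hp'.le)
      have hins : φ p = insert g V := by
        ext q
        constructor
        · intro hq
          rcases hq with ⟨h1, h2⟩ | ⟨h1, h2⟩
          · rcases eq_or_lt_of_le h1 with rfl | hlt
            · left
              simp only [hg, if_neg h2]
            · right
              exact (hVmem q).mpr ⟨q, hlt, Or.inl ⟨le_refl _, h2⟩⟩
          · rw [h1]
            by_cases hp : p = m₁
            · left; simp only [hg, if_pos hp]
            · right
              refine (hVmem m₀).mpr ⟨m₁, lt_of_le_of_ne h2 (fun he => hp he.symm), ?_⟩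
              exact Or.inr ⟨rfl, le_refl _⟩
        · intro hq
          rcases hq with rfl | hq
          · exact hgmem
          · obtain ⟨p', hp', hq⟩ := (hVmem q).mp hq
            exact mono hp'.le hq
      rw [hins, Set.ncard_insert_of_notMem hgnot]
    have hunion : (⋃ p : α, φ p) = {m₁}ᶜ := by
      ext q
      simp only [Set.mem_iUnion, Set.mem_compl_iff, Set.mem_singleton_iff]
      constructor
      · rintro ⟨p, ⟨_, h2⟩ | ⟨h1, _⟩⟩
        · exact h2
        · exact h1 ▸ hne
      · intro h
        exact ⟨q, Or.inl ⟨le_refl _, h⟩⟩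
    have hcard : ({m₁}ᶜ : Set α).ncard + 1 = Nat.card α := by
      rw [← Set.ncard_univ, ← Set.ncard_insert_of_notMem (by simp : m₁ ∉ ({m₁}ᶜ : Set α))]
      congr 1
      ext x; by_cases h : x = m₁ <;> simp [h]
    have := hsat α φ setrep parsfin
    rw [hunion] at this
    omega
  · -- fans skewly topped → saturated
    intro hfan Q φ hrep hpars
    have hsub : ∀ {p p' : α}, p ≤ p' → φ p ⊆ φ p' := by
      intro p p' h
      rcases eq_or_lt_of_le h with rfl | h
      · exact subset_refl _
      · exact ((hrep.2 _ _).mp h).subset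
    have hle : ∀ {p p' : α}, φ p ⊆ φ p' → p ≤ p' := by
      intro p p' h
      by_cases he : φ p = φ p'
      · exact (hrep.1 he).le
      · exact ((hrep.2 _ _).mpr (Set.ssubset_iff_subset_ne.mpr ⟨h, he⟩)).le
    set U : α → Set Q := fun p => ⋃ p' ∈ {x : α | x < p}, φ p' with hU
    have hUmem : ∀ (p : α) (q : Q), q ∈ U p ↔ ∃ p' : α, p' < p ∧ q ∈ φ p' := by
      intro p q; simp [hU]
    have hUsub : ∀ p : α, U p ⊆ φ p := by
      intro p q hq
      obtain ⟨p', hp', hq⟩ := (hUmem p q).mp hq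
      exact hsub hp'.le hq
    have hfin : ∀ p : α, (φ p).Finite := by
      intro p
      by_contra h
      have := Set.Infinite.ncard h
      have h2 := hpars p
      omega
    have hpars' : ∀ p : α, (φ p).ncard = (U p).ncard + 1 := by
      intro p
      simp only [hU]
      exact hpars p
    have hresid : ∀ p : α, ∃ q : Q, φ p \ U p = {q} := by
      intro p
      apply Set.ncard_eq_one.mp
      rw [Set.ncard_diff (hUsub p) ((hfin p).subset (hUsub p)), hpars' p]
      omega
    choose a ha using hresid
    have hmem : ∀ p : α, a p ∈ φ p := by
      intro p
      have : a p ∈ φ p \ U p := (ha p) ▸ rfl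
      exact this.1
    have hnot : ∀ p : α, a p ∉ U p := by
      intro p
      have : a p ∈ φ p \ U p := (ha p) ▸ rfl
      exact this.2
    have hUeq : ∀ (p : α) (q : Q), q ∈ φ p → q ≠ a p → q ∈ U p := by
      intro p q hq hne
      by_contra h
      have : q ∈ φ p \ U p := ⟨hq, h⟩
      rw [ha p] at this
      exact hne this
    -- the union is the range of a
    have hrange : (⋃ p : α, φ p) = Set.range a := by
      apply Set.Subset.antisymm
      · have main : ∀ (n : ℕ) (p : α), (φ p).ncard ≤ n → ∀ q ∈ φ p, q ∈ Set.range a := by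
          intro n
          induction n with
          | zero =>
            intro p hn q hq
            have : (φ p).ncard ≠ 0 := by
              have := hpars p; omega
            omega
          | succ n ih =>
            intro p hn q hq
            by_cases he : q = a p
            · exact ⟨p, he.symm⟩
            · obtain ⟨p', hp', hq'⟩ := (hUmem p q).mp (hUeq p q hq he)
              refine ih p' ?_ q hq'
              have hss : φ p' ⊂ φ p := (hrep.2 _ _).mp hp'
              have := Set.ncard_lt_ncard hss (hfin p)
              omega
        intro q hq
        obtain ⟨p, hp⟩ := Set.mem_iUnion.mp hq
        exact main (φ p).ncard p le_rfl q hp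
      · rintro q ⟨p, rfl⟩
        exact Set.mem_iUnion.mpr ⟨p, hmem p⟩
    -- a is injective
    have hinj : Function.Injective a := by
      intro p₀ p₁ hx
      by_contra hne
      -- basic incomparability
      have hincomp : ∀ u v : α, a u = a v → u ≠ v → ¬ u ≤ v := by
        intro u v huv hneq hle'
        have hlt : u < v := lt_of_le_of_ne hle' hneq
        have : a u ∈ U v := (hUmem v (a u)).mpr ⟨u, hlt, hmem u⟩
        rw [huv] at this
        exact hnot v this
      have h01 : ¬ p₀ ≤ p₁ := hincomp p₀ p₁ hx hne
      have h10 : ¬ p₁ ≤ p₀ := hincomp p₁ p₀ hx.symm (Ne.symm hne)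
      have hx1 : a p₁ ∈ φ p₀ := hx ▸ hmem p₀
      have hx0 : a p₀ ∈ φ p₁ := hx ▸ hmem p₁
      -- the fan sets
      set S : α → α → Set α := fun u v => {d | d < u ∧ ¬ d < v ∧ ∀ e, e < u → d ≤ e → d = e}
        with hS
      -- existence of maximal elements
      have hmax : ∀ u z : α, z < u → ∃ d, z ≤ d ∧ d < u ∧ ∀ e, e < u → d ≤ e → d = e := by
        intro u z hz
        obtain ⟨d, hzd, hd⟩ := Set.Finite.exists_le_maximal (Set.toFinite (Set.Iio u)) hz
        exact ⟨d, hzd, hd.1, fun e he hde => le_antisymm hde (hd.2 he hde)⟩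
      -- S u v is nonempty
      have hSne : ∀ u v : α, ¬ u ≤ v → a u ∈ φ v → (S u v).Nonempty := by
        intro u v huv hav
        by_contra hemp
        rw [Set.not_nonempty_iff_eq_empty] at hemp
        have hIio : ∀ z : α, z < u → z < v := by
          intro z hz
          obtain ⟨d, hzd, hdu, hdmax⟩ := hmax u z hz
          by_cases hdv : d < v
          · exact lt_of_le_of_lt hzd hdv
          · exfalso
            have : d ∈ S u v := ⟨hdu, hdv, hdmax⟩
            rw [hemp] at this
            exact this
        apply huv
        apply hle
        intro q hq
        by_cases he : q = a u
        · exact he ▸ hav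
        · obtain ⟨z, hz, hq'⟩ := (hUmem u q).mp (hUeq u q hq he)
          exact hsub (hIio z hz).le hq'
      have hS0 := hSne p₀ p₁ h01 hx0
      have hS1 := hSne p₁ p₀ h10 hx1
      -- fans
      have hFans : ∀ u v : α, (S u v).Nonempty → IsFan (insert u (S u v)) u := by
        intro u v ⟨d, hd⟩
        refine ⟨⟨⟨u, Set.mem_insert _ _, d, Set.mem_insert_of_mem _ hd, (ne_of_gt hd.1)⟩,
          Set.mem_insert _ _, ?_⟩, ?_⟩
        · rintro b (rfl | hb)
          · exact le_refl _
          · exact hb.1.le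
        · rintro b ⟨hb, hbne⟩ b' ⟨hb', hbne'⟩ hbb
          have hbS : b ∈ S u v := hb.resolve_left hbne
          have hbS' : b' ∈ S u v := hb'.resolve_left hbne'
          exact hbS.2.2 b' hbS'.1 hbb
      -- parallelism
      have hParS : ParallelB (insert p₀ (S p₀ p₁)) (insert p₁ (S p₁ p₀)) := by
        rintro b₀ (rfl | hb₀) b₁ (rfl | hb₁)
        · exact ⟨h01, h10⟩
        · constructor
          · intro h
            exact h01 (h.trans_lt hb₁.1).le
          · intro h
            rcases eq_or_lt_of_le h with he | hlt
            · exact h01 (by rw [← he]; exact hb₁.1.le)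
            · exact hb₁.2.1 hlt
        · constructor
          · intro h
            rcases eq_or_lt_of_le h with he | hlt
            · exact h10 (by rw [← he]; exact hb₀.1.le)
            · exact hb₀.2.1 hlt
          · intro h
            exact h10 (h.trans_lt hb₀.1).le
        · constructor
          · intro h
            exact hb₀.2.1 (h.trans_lt hb₁.1)
          · intro h
            exact hb₁.2.1 (h.trans_lt hb₀.1)
      obtain ⟨m, hm⟩ := hfan _ _ p₀ p₁ (hFans p₀ p₁ hS0) (hFans p₁ p₀ hS1) hParS
      -- the contradiction: a skew top forces comparability
      have hcontra : ∀ u v : α, a v ∈ φ u → u ≤ m → ¬ v ≤ m →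
          (∀ d ∈ S v u, d ≤ m) → False := by
        intro u v hav hum hvm hdm
        apply hvm
        apply hle
        intro q hq
        by_cases he : q = a v
        · exact hsub hum (he ▸ hav)
        · obtain ⟨z, hz, hq'⟩ := (hUmem v q).mp (hUeq v q hq he)
          obtain ⟨d, hzd, hdv, hdmax⟩ := hmax v z hz
          by_cases hdu : d < u
          · exact hsub hum (hsub (hzd.trans hdu.le) hq')
          · exact hsub (hdm d ⟨hdv, hdu, hdmax⟩) (hsub hzd hq')
      rcases hm with ⟨h1, h2, h3⟩ | ⟨h1, h2, h3⟩
      · refine hcontra p₀ p₁ hx1 h1 h2 ?_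
        intro d hd
        exact h3 d ⟨Set.mem_insert_of_mem _ hd, ne_of_lt hd.1⟩
      · refine hcontra p₁ p₀ hx0 h1 h2 ?_
        intro d hd
        exact h3 d ⟨Set.mem_insert_of_mem _ hd, ne_of_lt hd.1⟩
    rw [hrange, ← Nat.card_coe_set_eq, Nat.card_range_of_injective hinj]

end SatOrder
end

section
/- A partial order P = (P, ≤_P) is an interval order if and only if it does not contain a suborder of type 2 ⊕ 2, i.e., if and only if for all p₀, p₁, p₂, p₃ ∈ P, whenever p₀ <_P p₁ and p₂ <_P p₃, it holds that p₀ ≤_P p₃ or p₂ ≤_P p₁. -/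
namespace SatOrder

variable {α Q : Type}

/-- An interval order: a partial order admitting an interval representation, i.e. a map
assigning to each `p` a nonempty bounded open interval `(lo p, hi p)` (with `lo p < hi p`)
of some linear order `L`, such that `p < p'` iff every element of the interval of `p` is
below every element of the interval of `p'`. -/
def IsIntervalOrder (α : Type) [PartialOrder α] : Prop :=
  ∃ (L : Type) (_ : LinearOrder L) (lo hi : α → L),
    (∀ p : α, lo p < hi p ∧ (Set.Ioo (lo p) (hi p)).Nonempty) ∧
    ∀ p p' : α, p < p' ↔
      ∀ ℓ ∈ Set.Ioo (lo p) (hi p), ∀ ℓ' ∈ Set.Ioo (lo p') (hi p'), ℓ < ℓ'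

section Aux

variable {α : Type} [PartialOrder α]

private def Dset (p : α) : Set α := {x | x < p}
private def Eset (p : α) : Set α := {x | ∀ y, p < y → x < y}

private lemma Dset_ssubset_Eset (p : α) : Dset p ⊂ Eset p := by
  constructor
  · intro x hx y hy; exact hx.trans hy
  · intro h
    exact lt_irrefl p (h (fun y hy => hy))

private lemma Eset_subset_Dset_iff (p p' : α) : Eset p ⊆ Dset p' ↔ p < p' :=
  ⟨fun h => h (fun y hy => hy), fun h x hx => hx p' h⟩

variable (H : ∀ p₀ p₁ p₂ p₃ : α, p₀ < p₁ → p₂ < p₃ → p₀ ≤ p₃ ∨ p₂ ≤ p₁)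
include H

private lemma totDD (p p' : α) : Dset p ⊆ Dset p' ∨ Dset p' ⊆ Dset p := by
  by_contra hc
  push_neg at hc
  obtain ⟨hA, hB⟩ := hc
  obtain ⟨x, hx, hx'⟩ := Set.not_subset.mp hA
  obtain ⟨y, hy, hy'⟩ := Set.not_subset.mp hB
  simp only [Dset, Set.mem_setOf_eq] at hx hx' hy hy'
  rcases H x p y p' hx hy with h | h
  · rcases h.lt_or_eq with h | rfl
    · exact hx' h
    · exact hy' (hy.trans hx)
  · rcases h.lt_or_eq with h | rfl
    · exact hy' h
    · exact hx' (hx.trans hy)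

private lemma totDE (p p' : α) : Dset p ⊆ Eset p' ∨ Eset p' ⊆ Dset p := by
  by_contra hc
  push_neg at hc
  obtain ⟨hA, hB⟩ := hc
  obtain ⟨x, hx, hx'⟩ := Set.not_subset.mp hA
  obtain ⟨z, hz, hz'⟩ := Set.not_subset.mp hB
  simp only [Dset, Eset, Set.mem_setOf_eq, not_forall, Classical.not_imp] at hx hx' hz hz'
  obtain ⟨y', hy', hxy'⟩ := hx'
  have hzy' : z < y' := hz y' hy'
  rcases H x p z y' hx hzy' with h | h
  · rcases h.lt_or_eq with h | rfl
    · exact hxy' h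
    · exact hz' (hzy'.trans hx)
  · rcases h.lt_or_eq with h | rfl
    · exact hz' h
    · exact hxy' (hx.trans hzy')

private lemma totEE (p p' : α) : Eset p ⊆ Eset p' ∨ Eset p' ⊆ Eset p := by
  by_contra hc
  push_neg at hc
  obtain ⟨hA, hB⟩ := hc
  obtain ⟨x, hx, hx'⟩ := Set.not_subset.mp hA
  obtain ⟨z, hz, hz'⟩ := Set.not_subset.mp hB
  simp only [Eset, Set.mem_setOf_eq, not_forall, Classical.not_imp] at hx hx' hz hz'
  obtain ⟨y', hy', hxy'⟩ := hx'
  obtain ⟨y, hy, hzy⟩ := hz'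
  have hxy : x < y := hx y hy
  have hzy' : z < y' := hz y' hy'
  rcases H x y z y' hxy hzy' with h | h
  · rcases h.lt_or_eq with h | rfl
    · exact hxy' h
    · exact hzy ((hz x hy').trans hxy)
  · rcases h.lt_or_eq with h | rfl
    · exact hzy h
    · exact hxy' ((hx z hy).trans (hz y' hy'))

end Aux

/-- A partial order is an interval order iff it contains no suborder of type
`2 ⊕ 2`. -/
theorem intervalOrder_iff_no_two_plus_two {α : Type} [PartialOrder α] :
    IsIntervalOrder α ↔
      ∀ p₀ p₁ p₂ p₃ : α, p₀ < p₁ → p₂ < p₃ → p₀ ≤ p₃ ∨ p₂ ≤ p₁ := by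

  constructor
  · rintro ⟨L, _, lo, hi, _, hiff⟩ p₀ p₁ p₂ p₃ h01 h23
    by_contra hc
    push_neg at hc
    obtain ⟨h03, h21⟩ := hc
    have n03 : ¬ p₀ < p₃ := fun h => h03 h.le
    have n21 : ¬ p₂ < p₁ := fun h => h21 h.le
    rw [hiff] at n03 n21
    push_neg at n03 n21
    obtain ⟨a, ha, d, hd, had⟩ := n03
    obtain ⟨c, hc, b, hb, hcb⟩ := n21
    have hab : a < b := (hiff p₀ p₁).mp h01 a ha b hb
    have hcd : c < d := (hiff p₂ p₃).mp h23 c hc d hd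
    exact lt_irrefl a (((hab.trans_le hcb).trans hcd).trans_le had)
  · intro H
    classical
    set F : Set (Set α) := {S | (∃ p, S = Dset p) ∨ (∃ p, S = Eset p)} with hF
    have htot : ∀ s t : ↥F, s ≤ t ∨ t ≤ s := by
      rintro ⟨S, hS⟩ ⟨T, hT⟩
      have h : S ⊆ T ∨ T ⊆ S := by
        rcases hS with ⟨p, rfl⟩ | ⟨p, rfl⟩ <;> rcases hT with ⟨p', rfl⟩ | ⟨p', rfl⟩
        · exact totDD H p p'
        · exact totDE H p p'
        · exact (totDE H p' p).symm
        · exact totEE H p p'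
      exact h
    letI : LinearOrder ↥F :=
      { (inferInstance : PartialOrder ↥F) with
        le_total := htot
        toDecidableLE := Classical.decRel _ }
    have dense : ∀ a b : Lex (↥F × ℚ), a < b → ∃ c, a < c ∧ c < b := by
      intro a b hab
      rcases (Prod.Lex.lt_iff (x := a) (y := b)).mp hab with h | ⟨h1, h2⟩
      · exact ⟨toLex ((ofLex a).1, (ofLex a).2 + 1),
          (Prod.Lex.lt_iff (x := a)).mpr (Or.inr ⟨rfl, lt_add_one _⟩),
          (Prod.Lex.lt_iff (y := b)).mpr (Or.inl h)⟩
      · obtain ⟨q, hq1, hq2⟩ := exists_between h2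
        exact ⟨toLex ((ofLex a).1, q),
          (Prod.Lex.lt_iff (x := a)).mpr (Or.inr ⟨rfl, hq1⟩),
          (Prod.Lex.lt_iff (y := b)).mpr (Or.inr ⟨h1, hq2⟩)⟩
    have hDF : ∀ p : α, Dset p ∈ F := fun p => Or.inl ⟨p, rfl⟩
    have hEF : ∀ p : α, Eset p ∈ F := fun p => Or.inr ⟨p, rfl⟩
    let lo : α → Lex (↥F × ℚ) := fun p => toLex (⟨Dset p, hDF p⟩, 0)
    let hi : α → Lex (↥F × ℚ) := fun p => toLex (⟨Eset p, hEF p⟩, 0)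
    have hlt : ∀ p : α, lo p < hi p := by
      intro p
      refine (Prod.Lex.lt_iff (x := toLex ((⟨Dset p, hDF p⟩ : ↥F), (0:ℚ))) (y := toLex ((⟨Eset p, hEF p⟩ : ↥F), (0:ℚ)))).mpr (Or.inl ?_)
      exact Subtype.mk_lt_mk.mpr (Set.lt_iff_ssubset.mpr (Dset_ssubset_Eset p))
    have hkey : ∀ p p' : α, hi p ≤ lo p' ↔ p < p' := by
      intro p p'
      rw [show hi p ≤ lo p' ↔ _ ∨ _ from
        Prod.Lex.le_iff (x := toLex ((⟨Eset p, hEF p⟩ : ↥F), (0:ℚ))) (y := toLex ((⟨Dset p', hDF p'⟩ : ↥F), (0:ℚ)))]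
      constructor
      · rintro (h | ⟨h, -⟩)
        · exact (Eset_subset_Dset_iff p p').mp
            (Set.le_iff_subset.mp (le_of_lt (Subtype.mk_lt_mk.mp h)))
        · exact (Eset_subset_Dset_iff p p').mp (le_of_eq (congrArg Subtype.val h))
      · intro h
        have hsub : Eset p ⊆ Dset p' := (Eset_subset_Dset_iff p p').mpr h
        rcases eq_or_lt_of_le
            (Subtype.mk_le_mk.mpr (Set.le_iff_subset.mpr hsub) :
              (⟨Eset p, hEF p⟩ : ↥F) ≤ ⟨Dset p', hDF p'⟩) with h' | h'
        · exact Or.inr ⟨h', le_refl _⟩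
        · exact Or.inl h'
    refine ⟨Lex (↥F × ℚ), inferInstance, lo, hi, fun p => ⟨hlt p, ?_⟩, ?_⟩
    · obtain ⟨c, h1, h2⟩ := dense _ _ (hlt p)
      exact ⟨c, h1, h2⟩
    · intro p p'
      constructor
      · intro h ℓ hℓ ℓ' hℓ'
        exact hℓ.2.trans_le (((hkey p p').mpr h).trans hℓ'.1.le)
      · intro h
        by_contra hpp'
        have h1 : lo p' < hi p := lt_of_not_ge (fun hle => hpp' ((hkey p p').mp hle))
        rcases le_or_gt (hi p') (lo p) with h2 | h2
        · obtain ⟨ℓ, hℓ⟩ := dense _ _ (hlt p)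
          obtain ⟨ℓ', hℓ'⟩ := dense _ _ (hlt p')
          have hc := h ℓ ⟨hℓ.1, hℓ.2⟩ ℓ' ⟨hℓ'.1, hℓ'.2⟩
          exact absurd hc (not_lt.mpr ((hℓ'.2.trans_le h2).trans hℓ.1).le)
        · have hm : max (lo p) (lo p') < min (hi p) (hi p') :=
            max_lt (lt_min (hlt p) h2) (lt_min h1 (hlt p'))
          obtain ⟨ℓ, hℓ1, hℓ2⟩ := dense _ _ hm
          have hmem : ℓ ∈ Set.Ioo (lo p) (hi p) :=
            ⟨(le_max_left _ _).trans_lt hℓ1, hℓ2.trans_le (min_le_left _ _)⟩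
          have hmem' : ℓ ∈ Set.Ioo (lo p') (hi p') :=
            ⟨(le_max_right _ _).trans_lt hℓ1, hℓ2.trans_le (min_le_right _ _)⟩
          exact lt_irrefl ℓ (h ℓ hmem ℓ hmem')

end SatOrder
end

section
/- Every finite interval order is saturated. -/
namespace SatOrder

variable {α Q : Type}

/-- Every finite interval order is saturated. -/
theorem finite_intervalOrder_isSaturated {α : Type} [PartialOrder α] [Finite α]
    (h : IsIntervalOrder α) : IsSaturatedFin α := by
  intro Q φ hrep hpars
  obtain ⟨hinj, hlt⟩ := hrep
  set D : α → Set Q := fun p => ⋃ p' ∈ {x : α | x < p}, φ p' with hDdef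
  have hDsub : ∀ p, D p ⊆ φ p := by
    intro p q hq
    simp only [hDdef, Set.mem_iUnion, Set.mem_setOf_eq] at hq
    obtain ⟨p', hp', hq⟩ := hq
    exact ((hlt p' p).1 hp').1 hq
  have hfin : ∀ p, (φ p).Finite := by
    intro p
    apply Set.finite_of_ncard_ne_zero
    rw [hpars p]
    omega
  have hres : ∀ p, ∃ q, φ p \ D p = {q} := by
    intro p
    have h1 : (φ p \ D p).ncard = 1 := by
      rw [Set.ncard_diff (hDsub p) ((hfin p).subset (hDsub p)), hpars p]
      have hDe : (⋃ p' ∈ {x : α | x < p}, φ p') = D p := rfl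
      rw [hDe]
      omega
    exact Set.ncard_eq_one.mp h1
  choose a ha using hres
  have hap : ∀ p, a p ∈ φ p := by
    intro p
    have : a p ∈ φ p \ D p := by rw [ha p]; rfl
    exact this.1
  have hnotD : ∀ p, a p ∉ D p := by
    intro p
    have : a p ∈ φ p \ D p := by rw [ha p]; rfl
    exact this.2
  have hnotin : ∀ r p : α, r < p → a p ∉ φ r := by
    intro r p hr hmem
    exact hnotD p (by
      simp only [hDdef, Set.mem_iUnion, Set.mem_setOf_eq]
      exact ⟨r, hr, hmem⟩)
  have _ : WellFoundedLT α := Finite.to_wellFoundedLT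
  have hcover : ∀ p : α, ∀ q ∈ φ p, ∃ p', p' ≤ p ∧ a p' = q := by
    intro p
    induction p using WellFoundedLT.induction with
    | _ p ih =>
      intro q hq
      by_cases hqa : q ∈ D p
      · simp only [hDdef, Set.mem_iUnion, Set.mem_setOf_eq] at hqa
        obtain ⟨p', hp', hq'⟩ := hqa
        obtain ⟨p'', h1, h2⟩ := ih p' hp' q hq'
        exact ⟨p'', h1.trans hp'.le, h2⟩
      · refine ⟨p, le_refl p, ?_⟩
        have : q ∈ φ p \ D p := ⟨hq, hqa⟩
        rw [ha p] at this
        exact this.symm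
  obtain ⟨L, _, lo, hi, hne, hiff⟩ := h
  have two2free : ∀ p₁ p q₁ q : α, p₁ < p → q₁ < q → ¬ p₁ < q → q₁ < p := by
    intro p₁ p q₁ q h1 h2 h3
    rw [hiff] at h1 h2 h3 ⊢
    push_neg at h3
    obtain ⟨m, hm, m', hm', hmm⟩ := h3
    intro ℓ hℓ ℓ' hℓ'
    exact lt_of_lt_of_le (h2 ℓ hℓ m' hm') (le_trans hmm (le_of_lt (h1 m hm ℓ' hℓ')))
  have hainj : Function.Injective a := by
    intro p q hpq
    by_contra hne
    have hpq' : ¬ p < q := by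
      intro hlt'
      exact hnotin p q hlt' (hpq ▸ hap p)
    have hqp' : ¬ q < p := by
      intro hlt'
      exact hnotin q p hlt' (hpq.symm ▸ hap q)
    -- φ p and φ q are ⊆-incomparable
    have hns1 : ¬ φ p ⊆ φ q := by
      intro hs
      exact hpq' ((hlt p q).2 ⟨hs, fun h' => hne (hinj (le_antisymm hs h'))⟩)
    have hns2 : ¬ φ q ⊆ φ p := by
      intro hs
      exact hqp' ((hlt q p).2 ⟨hs, fun h' => hne (hinj (le_antisymm h' hs))⟩)
    obtain ⟨y, hy1, hy2⟩ := Set.not_subset.mp hns1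
    obtain ⟨z, hz1, hz2⟩ := Set.not_subset.mp hns2
    obtain ⟨p₁, hp₁le, hp₁a⟩ := hcover p y hy1
    obtain ⟨q₁, hq₁le, hq₁a⟩ := hcover q z hz1
    have hp₁lt : p₁ < p := by
      refine hp₁le.lt_of_ne ?_
      intro heq; subst heq
      rw [← hp₁a, hpq] at hy2
      exact hy2 (hap q)
    have hq₁lt : q₁ < q := by
      refine hq₁le.lt_of_ne ?_
      intro heq; subst heq
      rw [← hq₁a, ← hpq] at hz2
      exact hz2 (hap p)
    have hp₁q : ¬ p₁ < q := by
      intro h'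
      exact hy2 (hp₁a ▸ ((hlt p₁ q).1 h').1 (hap p₁))
    have hq₁p : ¬ q₁ < p := by
      intro h'
      exact hz2 (hq₁a ▸ ((hlt q₁ p).1 h').1 (hap q₁))
    exact hq₁p (two2free p₁ p q₁ q hp₁lt hq₁lt hp₁q)
  have hU : (⋃ p : α, φ p) = Set.range a := by
    ext q
    constructor
    · intro hq
      obtain ⟨p, hp⟩ := Set.mem_iUnion.mp hq
      obtain ⟨p', _, h2⟩ := hcover p q hp
      exact ⟨p', h2⟩
    · rintro ⟨p, rfl⟩
      exact Set.mem_iUnion.mpr ⟨p, hap p⟩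
  rw [hU, ← Set.image_univ, Set.ncard_image_of_injective _ hainj, Set.ncard_univ]

end SatOrder
end

section
/- Let f : ℕ → ℕ be injective. Define a relation ≤_P on P = ℕ × ℕ (writing p_{i,s} for the pair (i,s)) as follows: for all i < j in ℕ, p_{i,s} >_P p_{j,t} for all s, t ∈ ℕ; and for each i and all s < t in ℕ, p_{i,s} <_P p_{i,t} if s > 0, t ≥ 2, and f(t−2) = i, while p_{i,s} >_P p_{i,t} otherwise. Then ≤_P is a linear order on P in which every element has an immediate ≤_P-predecessor, and for every i ∈ ℕ, i is in the range of f if and only if the immediate ≤_P-predecessor of p_{i,0} is not p_{i,1}. -/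
namespace SatOrder

variable {α Q : Type}

/-- `p_{i,s} <_P p_{i,t}` (for `s < t` in the same row `i`) holds exactly when
`s > 0`, `t ≥ 2` and `f (t-2) = i`. -/
def rowlt (f : ℕ → ℕ) (i s t : ℕ) : Prop := 0 < s ∧ 2 ≤ t ∧ f (t - 2) = i

/-- The strict order `<_P` on `P = ℕ × ℕ` built from an injection `f : ℕ → ℕ`:
for `i < j`, `p_{i,s} >_P p_{j,t}` for all `s, t`; and for `s < t` in row `i`,
`p_{i,s} <_P p_{i,t}` if `s > 0`, `t ≥ 2` and `f(t-2) = i`, while `p_{i,s} >_P p_{i,t}`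
otherwise. -/
def plt (f : ℕ → ℕ) (p q : ℕ × ℕ) : Prop :=
  q.1 < p.1 ∨
    (p.1 = q.1 ∧ ((p.2 < q.2 ∧ rowlt f p.1 p.2 q.2) ∨ (q.2 < p.2 ∧ ¬ rowlt f p.1 q.2 p.2)))

/-- The order `≤_P` on `P = ℕ × ℕ` built from `f`. -/
def ple (f : ℕ → ℕ) (p q : ℕ × ℕ) : Prop := plt f p q ∨ p = q

/-- `q` is the immediate `≤_P`-predecessor of `p`. -/
def ImmPred (f : ℕ → ℕ) (q p : ℕ × ℕ) : Prop :=
  plt f q p ∧ ¬ ∃ r : ℕ × ℕ, plt f q r ∧ plt f r p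

open Classical in
/-- The rank of `s` within row `i`: position of `p_{i,s}` in the descending enumeration
of row `i`. -/
noncomputable def rk (f : ℕ → ℕ) (i s : ℕ) : ℕ :=
  if h : ∃ k, f k = i then
    if s = 0 then 0 else if s = h.choose + 2 then 1 else if s < h.choose + 2 then s + 1 else s
  else s

lemma rk_lt_iff (f : ℕ → ℕ) (hf : Function.Injective f) (i s t : ℕ) :
    rk f i t < rk f i s ↔
      ((s < t ∧ rowlt f i s t) ∨ (t < s ∧ ¬ rowlt f i t s)) := by
  unfold rk rowlt
  by_cases h : ∃ k, f k = i
  · simp only [dif_pos h]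
    have hfk0 : f h.choose = i := h.choose_spec
    have key : ∀ u, 2 ≤ u → (f (u - 2) = i ↔ u = h.choose + 2) := by
      intro u hu
      constructor
      · intro hfu; have := hf (hfu.trans hfk0.symm); omega
      · intro hu2; subst hu2; simpa using hfk0
    have h1 : ∀ a b : ℕ, (0 < a ∧ 2 ≤ b ∧ f (b - 2) = i) ↔ (0 < a ∧ 2 ≤ b ∧ b = h.choose + 2) := by
      intro a b
      constructor
      · rintro ⟨x, y, z⟩; exact ⟨x, y, (key b y).1 z⟩
      · rintro ⟨x, y, z⟩; exact ⟨x, y, (key b y).2 z⟩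
    rw [h1, h1]
    split_ifs <;> (try exact (‹False›).elim) <;> omega
  · simp only [dif_neg h]
    push_neg at h
    have h2 : f (t - 2) ≠ i := h _
    have h3 : f (s - 2) ≠ i := h _
    constructor
    · intro hts; right; exact ⟨hts, fun ⟨_, _, hc⟩ => h3 hc⟩
    · rintro (⟨_, _, _, hc⟩ | ⟨hts, _⟩)
      · exact absurd hc h2
      · exact hts

lemma plt_iff (f : ℕ → ℕ) (hf : Function.Injective f) (p q : ℕ × ℕ) :
    plt f p q ↔ q.1 < p.1 ∨ (p.1 = q.1 ∧ rk f p.1 q.2 < rk f p.1 p.2) :=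
  or_congr Iff.rfl (and_congr Iff.rfl (rk_lt_iff f hf p.1 p.2 q.2).symm)

lemma rk_surj (f : ℕ → ℕ) (i n : ℕ) : ∃ s, rk f i s = n := by
  unfold rk
  by_cases h : ∃ k, f k = i
  · simp only [dif_pos h]
    refine ⟨if n = 0 then 0 else if n = 1 then h.choose + 2 else
      if n ≤ h.choose + 2 then n - 1 else n, ?_⟩
    split_ifs <;> (try exact (‹False›).elim) <;> omega
  · exact ⟨n, by simp [dif_neg h]⟩

lemma rk_inj (f : ℕ → ℕ) (i s t : ℕ) (hst : rk f i s = rk f i t) : s = t := by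
  unfold rk at hst
  by_cases h : ∃ k, f k = i
  · simp only [dif_pos h] at hst
    split_ifs at hst <;> (try exact (‹False›).elim) <;> omega
  · simpa [dif_neg h] using hst

/-- For injective `f : ℕ → ℕ`, the relation `≤_P` on `ℕ × ℕ` is a linear
order in which every element has an immediate predecessor, and `i` is in the range of `f`
iff the immediate predecessor of `p_{i,0}` is not `p_{i,1}`. -/
theorem ple_linearOrder_immPred (f : ℕ → ℕ) (hf : Function.Injective f) :
    IsLinearOrder (ℕ × ℕ) (ple f) ∧
      (∀ p : ℕ × ℕ, ∃ q : ℕ × ℕ, ImmPred f q p) ∧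
      (∀ i : ℕ, i ∈ Set.range f ↔ ¬ ImmPred f (i, 1) (i, 0)) := by
  have hchar := plt_iff f hf
  refine ⟨?_, ?_, ?_⟩
  · refine { refl := ?_, trans := ?_, antisymm := ?_, total := ?_ }
    · -- refl
      intro a; exact Or.inr rfl
    · -- trans
      intro a b c hab hbc
      rcases hab with hab | rfl
      · rcases hbc with hbc | rfl
        · left
          rw [hchar] at hab hbc ⊢
          rcases hab with h1 | ⟨h1, h1'⟩ <;> rcases hbc with h2 | ⟨h2, h2'⟩
          · left; omega
          · left; omega
          · left; omega
          · right
            refine ⟨h1.trans h2, ?_⟩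
            rw [← h1] at h2'
            omega
        · exact Or.inl hab
      · exact hbc
    · -- antisymm
      intro a b hab hba
      rcases hab with hab | rfl
      · rcases hba with hba | rfl
        · exfalso
          rw [hchar] at hab hba
          rcases hab with h1 | ⟨h1, h1'⟩ <;> rcases hba with h2 | ⟨h2, h2'⟩
          · omega
          · omega
          · omega
          · rw [← h1] at h2'; omega
        · rfl
      · rfl
    · -- total
      intro a b
      rcases lt_trichotomy a.1 b.1 with h | h | h
      · right; left; rw [hchar]; left; exact h
      · rcases lt_trichotomy (rk f a.1 a.2) (rk f a.1 b.2) with h' | h' | h'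
        · right; left; rw [hchar]; right; exact ⟨h.symm, by rw [← h]; exact h'⟩
        · left; right
          exact Prod.ext h (rk_inj f a.1 a.2 b.2 h')
        · left; left; rw [hchar]; right; exact ⟨h, by rw [h] at h' ⊢; exact h'⟩
      · left; left; rw [hchar]; left; exact h
  · -- immediate predecessors
    intro p
    obtain ⟨s', hs'⟩ := rk_surj f p.1 (rk f p.1 p.2 + 1)
    refine ⟨(p.1, s'), ?_, ?_⟩
    · rw [hchar]; right; exact ⟨rfl, by simp only; omega⟩
    · rintro ⟨r, h1, h2⟩
      rw [hchar] at h1 h2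
      simp only at h1 h2
      rcases h1 with h1 | ⟨h1, h1'⟩ <;> rcases h2 with h2 | ⟨h2, h2'⟩
      · omega
      · omega
      · omega
      · rw [← h1] at h2'; omega
  · -- range characterization
    intro i
    constructor
    · rintro ⟨k, hk⟩
      have h : ∃ k, f k = i := ⟨k, hk⟩
      have hr1 : rk f i 1 = 2 := by
        unfold rk; rw [dif_pos h]
        have : 1 ≠ h.choose + 2 := by omega
        simp [this]
      have hr0 : rk f i 0 = 0 := by
        unfold rk; rw [dif_pos h]; simp
      have hrt : rk f i (h.choose + 2) = 1 := by
        unfold rk; rw [dif_pos h]; simp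
      rintro ⟨hp1, hp2⟩
      apply hp2
      refine ⟨(i, h.choose + 2), ?_, ?_⟩
      · rw [hchar]; right
        refine ⟨rfl, ?_⟩
        show rk f i (h.choose + 2) < rk f i 1
        omega
      · rw [hchar]; right
        refine ⟨rfl, ?_⟩
        show rk f i 0 < rk f i (h.choose + 2)
        omega
    · intro hni
      by_contra hri
      apply hni
      have h : ¬ ∃ k, f k = i := by
        intro ⟨k, hk⟩; exact hri ⟨k, hk⟩
      have hrk : ∀ s, rk f i s = s := by
        intro s; unfold rk; rw [dif_neg h]
      constructor
      · rw [hchar]; right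
        refine ⟨rfl, ?_⟩
        show rk f i 0 < rk f i 1
        rw [hrk, hrk]
        omega
      · rintro ⟨r, h1, h2⟩
        rw [hchar] at h1 h2
        simp only at h1 h2
        rcases h1 with h1 | ⟨h1, h1'⟩ <;> rcases h2 with h2 | ⟨h2, h2'⟩
        · omega
        · omega
        · omega
        · rw [h2] at h2'
          rw [hrk, hrk] at h1'
          rw [hrk, hrk] at h2'
          omega

end SatOrder
end

section
/- Let f : ℕ → ℕ be injective, and let ≤_P be the linear order on P = ℕ × ℕ defined by: for all i < j in ℕ, p_{i,s} >_P p_{j,t} for all s, t ∈ ℕ; and for each i and all s < t in ℕ, p_{i,s} <_P p_{i,t} if s > 0, t ≥ 2, and f(t−2) = i, while p_{i,s} >_P p_{i,t} otherwise (where p_{i,s} denotes the pair (i,s)). Define φ : P → 𝒫(P) by φ(p) = {p' ∈ P : p' <_P p and p' ≠ p_{i,0} for all i ∈ ℕ}. Then φ is a parsimonious set representation of (P, ≤_P), and α_φ(p) is the immediate ≤_P-predecessor of p for every p ∈ P. -/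
namespace SatOrder

variable {α Q : Type}

variable {P : Type}

section Aux
variable {f : ℕ → ℕ}

lemma plt_row {i a b : ℕ} : plt f (i,a) (i,b) ↔
    (a < b ∧ rowlt f i a b) ∨ (b < a ∧ ¬ rowlt f i b a) := by
  simp [plt]

lemma plt_irrefl (f : ℕ → ℕ) (p : ℕ × ℕ) : ¬ plt f p p := by
  rintro (h | ⟨-, ⟨h, -⟩ | ⟨h, -⟩⟩) <;> omega

lemma plt_asymm {p q : ℕ × ℕ} (h : plt f p q) (h' : plt f q p) : False := by
  obtain ⟨i, a⟩ := p; obtain ⟨j, b⟩ := q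
  rcases h with h | ⟨e, h⟩ <;> rcases h' with h' | ⟨e', h'⟩ <;> dsimp at * <;>
      [omega; omega; omega; skip]
  subst e
  rcases h with ⟨h1, h2⟩ | ⟨h1, h2⟩ <;> rcases h' with ⟨h1', h2'⟩ | ⟨h1', h2'⟩ <;>
    first | omega | exact h2' h2 | exact h2 h2'

lemma plt_total {p q : ℕ × ℕ} (h : p ≠ q) : plt f p q ∨ plt f q p := by
  obtain ⟨i, a⟩ := p; obtain ⟨j, b⟩ := q
  rcases Nat.lt_trichotomy i j with hij | rfl | hij
  · exact Or.inr (Or.inl hij)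
  · have hab : a ≠ b := by simpa using h
    rcases Nat.lt_trichotomy a b with h' | h' | h'
    · by_cases hr : rowlt f i a b
      · exact Or.inl (plt_row.2 (Or.inl ⟨h', hr⟩))
      · exact Or.inr (plt_row.2 (Or.inr ⟨h', hr⟩))
    · omega
    · by_cases hr : rowlt f i b a
      · exact Or.inr (plt_row.2 (Or.inl ⟨h', hr⟩))
      · exact Or.inl (plt_row.2 (Or.inr ⟨h', hr⟩))
  · exact Or.inl (Or.inl hij)

lemma plt_trans (hf : Function.Injective f) {p q r : ℕ × ℕ}
    (h : plt f p q) (h' : plt f q r) : plt f p r := by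
  obtain ⟨i, a⟩ := p; obtain ⟨j, b⟩ := q; obtain ⟨k, c⟩ := r
  rcases h with h | ⟨e, h⟩
  · rcases h' with h' | ⟨e', h'⟩
    · exact Or.inl (by dsimp at *; omega)
    · exact Or.inl (by dsimp at *; omega)
  · rcases h' with h' | ⟨e', h'⟩
    · exact Or.inl (by dsimp at *; omega)
    · dsimp at e e' h h'; subst e; subst e'
      rw [plt_row]
      rcases h with ⟨h1, h2, h3, h4⟩ | ⟨h1, h2⟩ <;>
        rcases h' with ⟨h1', h2', h3', h4'⟩ | ⟨h1', h2'⟩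
      · -- a<b rowlt a b ; b<c rowlt b c : f(b-2)=i=f(c-2) → b=c contra
        have := hf (h4.trans h4'.symm); omega
      · -- a<b rowlt a b ; c<b ¬rowlt c b : c must be 0
        have hc : c = 0 := by
          by_contra hc
          exact h2' ⟨by omega, h3, h4⟩
        subst hc
        exact Or.inr ⟨by omega, fun ⟨h5, _⟩ => by omega⟩
      · -- b<a ¬rowlt b a ; b<c rowlt b c
        rcases Nat.lt_trichotomy a c with hac | rfl | hac
        · exact Or.inl ⟨hac, by omega, h3', h4'⟩
        · exact absurd ⟨h2', h3', h4'⟩ h2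
        · refine Or.inr ⟨hac, fun ⟨h5, h6, h7⟩ => ?_⟩
          have := hf (h7.trans h4'.symm); omega
      · -- b<a ¬rowlt b a ; c<b ¬rowlt c b : c<b<a
        refine Or.inr ⟨by omega, fun ⟨h5, h6, h7⟩ => h2 ⟨by omega, h6, h7⟩⟩

end Aux
section Aux2
variable {f : ℕ → ℕ}

open Classical in
/-- the immediate predecessor of `p` -/
noncomputable def predp (f : ℕ → ℕ) (p : ℕ × ℕ) : ℕ × ℕ :=
  if p.2 = 0 then
    (if h : ∃ k, f k = p.1 then (p.1, Classical.choose h + 2) else (p.1, 1))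
  else if f (p.2 - 1) = p.1 then (p.1, p.2 + 2)
  else if 2 ≤ p.2 ∧ f (p.2 - 2) = p.1 then (p.1, 1)
  else (p.1, p.2 + 1)

open Classical in
/-- the immediate successor of a nonzero `q` -/
noncomputable def succp (f : ℕ → ℕ) (p : ℕ × ℕ) : ℕ × ℕ :=
  if p.2 = 1 then
    (if h : ∃ k, f k = p.1 then (p.1, Classical.choose h + 2) else (p.1, 0))
  else if 2 ≤ p.2 ∧ f (p.2 - 2) = p.1 then (p.1, 0)
  else if 3 ≤ p.2 ∧ f (p.2 - 3) = p.1 then (p.1, p.2 - 2)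
  else (p.1, p.2 - 1)

lemma predp_snd_pos (f : ℕ → ℕ) (p : ℕ × ℕ) : 0 < (predp f p).2 := by
  obtain ⟨i, s⟩ := p
  simp only [predp]
  split_ifs <;> simp <;> omega

lemma predp_fst (f : ℕ → ℕ) (p : ℕ × ℕ) : (predp f p).1 = p.1 := by
  obtain ⟨i, s⟩ := p
  simp only [predp]
  split_ifs <;> simp

lemma predp_plt (hf : Function.Injective f) (p : ℕ × ℕ) : plt f (predp f p) p := by
  obtain ⟨i, s⟩ := p
  simp only [predp]
  split_ifs with h0 h1 h2 h3
  · -- s = 0, ∃ k, f k = i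
    subst h0
    have hs := Classical.choose_spec h1
    exact plt_row.2 (Or.inr ⟨by omega, fun ⟨u1, u2, u3⟩ => by omega⟩)
  · -- s = 0, no k
    subst h0
    exact plt_row.2 (Or.inr ⟨by omega, fun ⟨u1, u2, u3⟩ => by omega⟩)
  · -- s ≥ 1, f (s-1) = i : pred = (i, s+2); plt (i,s+2) (i,s): s < s+2 ∧ ¬rowlt i s (s+2)
    refine plt_row.2 (Or.inr ⟨by omega, fun ⟨u1, u2, u3⟩ => ?_⟩)
    -- u3 : f (s + 2 - 2) = i, h2 : f (s-1) = i
    have : s + 2 - 2 = s := by omega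
    rw [this] at u3
    have := hf (u3.trans h2.symm); omega
  · -- s = t_i : pred = (i,1); plt (i,1) (i,s): 1 < s ∧ rowlt i 1 s
    exact plt_row.2 (Or.inl ⟨by omega, by omega, h3.1, h3.2⟩)
  · -- generic : pred = (i, s+1); plt (i,s+1) (i,s)
    refine plt_row.2 (Or.inr ⟨by omega, fun ⟨u1, u2, u3⟩ => ?_⟩)
    have : s + 1 - 2 = s - 1 := by omega
    rw [this] at u3
    exact h2 u3

lemma between_fst {i a b : ℕ} {r : ℕ × ℕ} (h1 : plt f (i,a) r) (h2 : plt f r (i,b)) :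
    r = (i, r.2) := by
  have e1 : r.1 < i ∨ i = r.1 := by
    rcases h1 with h | ⟨h, -⟩ <;> [exact Or.inl h; exact Or.inr h]
  have e2 : i < r.1 ∨ r.1 = i := by
    rcases h2 with h | ⟨h, -⟩ <;> [exact Or.inl h; exact Or.inr h]
  have : r.1 = i := by omega
  exact Prod.ext this rfl

lemma predp_imm (hf : Function.Injective f) (p r : ℕ × ℕ)
    (h1 : plt f (predp f p) r) (h2 : plt f r p) : False := by
  obtain ⟨i, s⟩ := p
  have hfst := predp_fst f (i, s)
  have hr : r = (i, r.2) := by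
    have : predp f (i,s) = (i, (predp f (i,s)).2) := Prod.ext hfst rfl
    rw [this] at h1
    exact between_fst h1 h2
  set b := r.2 with hb
  rw [hr] at h1 h2
  simp only [predp] at h1
  split_ifs at h1 with h0 hex hcase2 hcase3
  · -- s = 0, t_i exists
    subst h0
    have hs := Classical.choose_spec hex
    set k0 := Classical.choose hex with hk0
    rw [plt_row] at h1 h2
    rcases h2 with ⟨u1, -⟩ | ⟨u1, -⟩
    · omega
    · -- 0 < b
      rcases h1 with ⟨v1, v2, v3, v4⟩ | ⟨v1, v2⟩
      · have := hf (v4.trans hs.symm); omega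
      · exact v2 ⟨by omega, by omega, by rwa [show k0 + 2 - 2 = k0 from by omega]⟩
  · -- s = 0, no t_i
    subst h0
    rw [plt_row] at h1 h2
    rcases h2 with ⟨u1, -⟩ | ⟨u1, -⟩
    · omega
    · rcases h1 with ⟨v1, v2, v3, v4⟩ | ⟨v1, v2⟩
      · exact hex ⟨_, v4⟩
      · omega
  · -- s ≥ 1, f (s-1) = i, pred = (i, s+2)
    rw [plt_row] at h1 h2
    rcases h1 with ⟨v1, v2, v3, v4⟩ | ⟨v1, v2⟩
    · have := hf (v4.trans hcase2.symm); omega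
    · rcases h2 with ⟨u1, u2, u3, u4⟩ | ⟨u1, u2⟩
      · -- b < s ∧ rowlt i b s : f(s-2) = i = f(s-1) contra
        have := hf (u4.trans hcase2.symm); omega
      · -- s < b ∧ b < s + 2 → b = s+1; rowlt i s b holds : contra with u2
        exact u2 ⟨by omega, by omega, by rwa [show b - 2 = s - 1 from by omega]⟩
  · -- s = t_i, pred = (i,1)
    obtain ⟨hs2, hfs⟩ := hcase3
    rw [plt_row] at h1 h2
    rcases h1 with ⟨v1, v2, v3, v4⟩ | ⟨v1, v2⟩
    · -- 1 < b, f(b-2) = i → b = s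
      have := hf (v4.trans hfs.symm)
      have hbs : b = s := by omega
      subst hbs
      rcases h2 with ⟨u1, -⟩ | ⟨u1, -⟩ <;> omega
    · -- b < 1 → b = 0
      rcases h2 with ⟨u1, u2, -⟩ | ⟨u1, -⟩ <;> omega
  · -- generic, pred = (i, s+1)
    rw [plt_row] at h1 h2
    rcases h2 with ⟨u1, u2, u3, u4⟩ | ⟨u1, u2⟩
    · exact hcase3 ⟨u3, u4⟩
    · rcases h1 with ⟨v1, v2, v3, v4⟩ | ⟨v1, v2⟩
      · exact u2 ⟨by omega, v3, v4⟩
      · omega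

end Aux2
section Aux3
variable {f : ℕ → ℕ}

lemma succp_plt (hf : Function.Injective f) (q : ℕ × ℕ) (hq : q.2 ≠ 0) :
    plt f q (succp f q) := by
  obtain ⟨i, s⟩ := q
  simp only at hq
  simp only [succp]
  split_ifs with h0 h1 h2 h3
  · -- s = 1, t_i exists
    subst h0
    have hs := Classical.choose_spec h1
    exact plt_row.2 (Or.inl ⟨by omega, by omega, by omega,
      by rwa [show Classical.choose h1 + 2 - 2 = Classical.choose h1 from by omega]⟩)
  · -- s = 1, no t_i : succ = (i,0)
    subst h0
    exact plt_row.2 (Or.inr ⟨by omega, fun hco => by exact absurd hco.1 (by omega)⟩)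
  · -- s = t_i : succ = (i,0)
    exact plt_row.2 (Or.inr ⟨by omega, fun hco => by exact absurd hco.1 (by omega)⟩)
  · -- s = t_i + 1 : succ = (i, s-2)
    obtain ⟨hs3, hfs⟩ := h3
    refine plt_row.2 (Or.inr ⟨by omega, fun ⟨u1, u2, u3⟩ => ?_⟩)
    have := hf (u3.trans hfs.symm); omega
  · -- generic : succ = (i, s-1)
    refine plt_row.2 (Or.inr ⟨by omega, fun ⟨u1, u2, u3⟩ => ?_⟩)
    exact h2 ⟨u2, u3⟩

lemma succp_fst (f : ℕ → ℕ) (q : ℕ × ℕ) : (succp f q).1 = q.1 := by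
  obtain ⟨i, s⟩ := q
  simp only [succp]
  split_ifs <;> simp

lemma succp_imm (hf : Function.Injective f) (q r : ℕ × ℕ) (hq : q.2 ≠ 0)
    (h1 : plt f q r) (h2 : plt f r (succp f q)) : False := by
  obtain ⟨i, s⟩ := q
  simp only at hq
  have hr : r = (i, r.2) := by
    have : succp f (i,s) = (i, (succp f (i,s)).2) := Prod.ext (succp_fst f (i,s)) rfl
    rw [this] at h2
    exact between_fst h1 h2
  set b := r.2 with hb
  rw [hr] at h1 h2
  simp only [succp] at h2
  split_ifs at h2 with h0 hex hcase2 hcase3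
  · -- s = 1, t_i = k0 + 2 exists
    subst h0
    have hs := Classical.choose_spec hex
    set k0 := Classical.choose hex with hk0
    rw [plt_row] at h1 h2
    rcases h1 with ⟨u1, u2, u3, u4⟩ | ⟨u1, -⟩
    · -- 1 < b ∧ f (b-2) = i → b = k0 + 2
      have := hf (u4.trans hs.symm)
      rcases h2 with ⟨v1, -⟩ | ⟨v1, -⟩ <;> omega
    · -- b < 1 → b = 0
      rcases h2 with ⟨v1, v2, -, -⟩ | ⟨v1, -⟩
      · omega
      · omega
  · -- s = 1, no t_i; succ = (i,0)
    subst h0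
    rw [plt_row] at h1 h2
    rcases h2 with ⟨v1, -⟩ | ⟨v1, -⟩
    · omega
    · -- 0 < b
      rcases h1 with ⟨u1, u2, u3, u4⟩ | ⟨u1, -⟩
      · exact hex ⟨_, u4⟩
      · omega
  · -- s = t_i ; succ = (i,0)
    obtain ⟨hs2, hfs⟩ := hcase2
    rw [plt_row] at h1 h2
    rcases h2 with ⟨v1, -⟩ | ⟨v1, -⟩
    · omega
    · rcases h1 with ⟨u1, u2, u3, u4⟩ | ⟨u1, u2⟩
      · have := hf (u4.trans hfs.symm); omega
      · exact u2 ⟨by omega, hs2, hfs⟩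
  · -- s = t_i + 1 ; succ = (i, s - 2)
    obtain ⟨hs3, hfs⟩ := hcase3
    rw [plt_row] at h1 h2
    rcases h1 with ⟨u1, u2, u3, u4⟩ | ⟨u1, u2⟩
    · -- s < b, f (b-2) = i
      rcases h2 with ⟨v1, v2, v3, v4⟩ | ⟨v1, v2⟩
      · omega
      · exact v2 ⟨by omega, by omega, u4⟩
    · -- b < s
      rcases h2 with ⟨v1, v2, v3, v4⟩ | ⟨v1, v2⟩
      · -- b < s - 2, 2 ≤ s - 2, f (s - 2 - 2) = i : s ≥ 4 so s-4 ≠ s-3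
        have := hf (v4.trans hfs.symm); omega
      · -- s - 2 < b ∧ b < s → b = s - 1
        refine v2 ⟨by omega, by omega, ?_⟩
        rwa [show b - 2 = s - 3 from by omega]
  · -- generic : succ = (i, s - 1), s ≥ 2
    rw [plt_row] at h1 h2
    rcases h2 with ⟨v1, v2, v3, v4⟩ | ⟨v1, v2⟩
    · -- b < s - 1 ∧ 2 ≤ s - 1 ∧ f (s-1-2) = i → contra hcase3
      exact hcase3 ⟨by omega, by rwa [show s - 1 - 2 = s - 3 from by omega] at v4⟩
    · -- s - 1 < b
      rcases h1 with ⟨u1, u2, u3, u4⟩ | ⟨u1, u2⟩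
      · exact v2 ⟨by omega, u3, u4⟩
      · omega

end Aux3

section Main
variable {f : ℕ → ℕ}

def phi (f : ℕ → ℕ) : (ℕ × ℕ) → Set (ℕ × ℕ) :=
  fun p => {p' : ℕ × ℕ | plt f p' p ∧ ∀ i : ℕ, p' ≠ (i, 0)}

lemma ne_zero_iff {q : ℕ × ℕ} : (∀ i : ℕ, q ≠ (i, 0)) ↔ q.2 ≠ 0 := by
  constructor
  · intro h h0
    exact h q.1 (Prod.ext rfl h0)
  · intro h i hq
    rw [hq] at h; exact h rfl

lemma rlt_ple {x y : ℕ × ℕ} : rlt (ple f) x y ↔ plt f x y := by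
  constructor
  · rintro ⟨h1 | rfl, h2⟩
    · exact h1
    · exact absurd (Or.inr rfl) h2
  · intro h
    refine ⟨Or.inl h, ?_⟩
    rintro (h' | rfl)
    · exact plt_asymm h h'
    · exact plt_irrefl f _ h

lemma resid_singleton (hf : Function.Injective f) {p q : ℕ × ℕ}
    (h1 : plt f q p) (h2 : q.2 ≠ 0)
    (h3 : ∀ r, plt f q r → plt f r p → False) :
    residR (ple f) (phi f) p = {q} := by
  ext r
  simp only [residR, Set.mem_diff, Set.mem_iUnion, Set.mem_setOf_eq,
    Set.mem_singleton_iff, phi, not_exists, exists_prop]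
  constructor
  · rintro ⟨⟨hrp, hrz⟩, hu⟩
    by_contra hne
    rcases plt_total hne with h | h
    · exact hu q ⟨rlt_ple.2 h1, h, hrz⟩
    · exact h3 r h hrp
  · rintro rfl
    refine ⟨⟨h1, ne_zero_iff.2 h2⟩, ?_⟩
    rintro x ⟨hx, hmem, -⟩
    exact h3 x hmem (rlt_ple.1 hx)

lemma phi_not_subset (hf : Function.Injective f) {p p' : ℕ × ℕ}
    (hlt : plt f p p') : ¬ phi f p' ⊆ phi f p := by
  intro hsub
  have hm : predp f p' ∈ phi f p' :=
    ⟨predp_plt hf p', ne_zero_iff.2 (by have := predp_snd_pos f p'; omega)⟩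
  exact predp_imm hf p' p (hsub hm).1 hlt

lemma phi_mono_s19 (hf : Function.Injective f) {p p' : ℕ × ℕ}
    (hlt : plt f p p') : phi f p ⊆ phi f p' := by
  rintro r ⟨hr, hz⟩
  exact ⟨plt_trans hf hr hlt, hz⟩

end Main

/-- For injective `f : ℕ → ℕ`, the map
`φ p = {p' : p' <_P p ∧ p' ≠ p_{i,0} for all i}` is a parsimonious set representation of
`(ℕ × ℕ, ≤_P)`, and `α_φ p` is the immediate `≤_P`-predecessor of `p` for every `p`. -/
theorem phi_parsimonious_alpha_eq_immPred (f : ℕ → ℕ) (hf : Function.Injective f) :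
    letI φ : ℕ × ℕ → Set (ℕ × ℕ) :=
      fun p => {p' : ℕ × ℕ | plt f p' p ∧ ∀ i : ℕ, p' ≠ (i, 0)}
    IsParsimoniousR (ple f) φ ∧
      ∀ (p q : ℕ × ℕ), residR (ple f) φ p = {q} → ImmPred f q p := by
  show IsParsimoniousR (ple f) (phi f) ∧
      ∀ (p q : ℕ × ℕ), residR (ple f) (phi f) p = {q} → ImmPred f q p
  have hpred : ∀ p, residR (ple f) (phi f) p = {predp f p} := fun p =>
    resid_singleton hf (predp_plt hf p)
      (by have := predp_snd_pos f p; omega) (predp_imm hf p)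
  refine ⟨⟨⟨?_, ?_⟩, ?_, ?_⟩, ?_⟩
  · -- injective
    intro p p' h
    by_contra hne
    rcases plt_total hne with hl | hl
    · exact phi_not_subset hf hl (le_of_eq h.symm)
    · exact phi_not_subset hf hl (le_of_eq h)
  · -- order iff
    intro p p'
    rw [rlt_ple, Set.ssubset_def]
    constructor
    · intro h
      exact ⟨phi_mono_s19 hf h, phi_not_subset hf h⟩
    · rintro ⟨hsub, hnsub⟩
      rcases eq_or_ne p p' with rfl | hne
      · exact absurd hsub hnsub
      · rcases plt_total hne with h' | h'
        · exact h'
        · exact absurd (phi_mono_s19 hf h') hnsub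
  · -- residuals are singletons
    exact fun p => ⟨predp f p, hpred p⟩
  · -- every element of φ p is a residual element
    rintro p q ⟨hqp, hqz⟩
    have hz : q.2 ≠ 0 := ne_zero_iff.1 hqz
    refine ⟨succp f q, ?_, ?_⟩
    · rcases eq_or_ne (succp f q) p with he | hne
      · exact Or.inr he
      · rcases plt_total hne with h | h
        · exact Or.inl h
        · exact (succp_imm hf q p hz hqp h).elim
    · exact resid_singleton hf (succp_plt hf q hz) hz (fun r => succp_imm hf q r hz)
  · -- residual element is the immediate predecessor
    intro p q h
    have hq : q = predp f p := by
      have := hpred p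
      rw [h] at this
      exact Set.singleton_eq_singleton_iff.1 this
    subst hq
    exact ⟨predp_plt hf p, fun ⟨r, h1, h2⟩ => predp_imm hf p r h1 h2⟩

end SatOrder
end
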